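/- arXiv:1206.5197 — 6 statements merged into one kernel-verified Lean document; each statement's English description precedes it below -/
import Mathlib

section
/- Let S ⊆ ℝ^n × ℝ^m be a Lebesgue-measurable set, let z₀ ∈ ℝ^m be a fixed point, and let ε > 0 and δ > 0. Then the set T of all points x ∈ ℝ^n such that λ_m({z ∈ ℝ^m : (x,z) ∈ S and |z − z₀| ≤ r}) ≤ ε r^m for all 0 < r < δ is Lebesgue measurable (λ_m denotes m-dimensional Lebesgue measure). -/
open MeasureTheory Metric Filter Set Function
open scoped Topology ENNReal NNReal

/-- Measurability of the set `T` of points `x` such that the slices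
`{z : (x,z) ∈ S, |z − z₀| ≤ r}` have measure at most `ε rᵐ` for all `0 < r < δ`. -/
theorem measurable_slice_smallness_set {n m : ℕ}
    (S : Set (EuclideanSpace ℝ (Fin n) × EuclideanSpace ℝ (Fin m)))
    (hS : MeasurableSet S) (z₀ : EuclideanSpace ℝ (Fin m))
    (ε δ : ℝ) (hε : 0 < ε) (hδ : 0 < δ) :
    MeasurableSet {x : EuclideanSpace ℝ (Fin n) |
      ∀ r : ℝ, 0 < r → r < δ →
        volume {z : EuclideanSpace ℝ (Fin m) | (x, z) ∈ S ∧ dist z z₀ ≤ r}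
          ≤ ENNReal.ofReal (ε * r ^ m)} := by
  set f : EuclideanSpace ℝ (Fin n) → ℝ → ℝ≥0∞ := fun x r =>
    volume {z : EuclideanSpace ℝ (Fin m) | (x, z) ∈ S ∧ dist z z₀ ≤ r} with hf
  have key : ∀ r : ℝ, Measurable (fun x => f x r) := by
    intro r
    have hmeas : MeasurableSet {p : EuclideanSpace ℝ (Fin n) × EuclideanSpace ℝ (Fin m) |
        p ∈ S ∧ dist p.2 z₀ ≤ r} :=
      hS.inter (measurable_snd (measurableSet_closedBall (x := z₀) (ε := r)))
    exact measurable_measure_prodMk_left hmeas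
  have hmono : ∀ x, ∀ r s : ℝ, r ≤ s → f x r ≤ f x s := by
    intro x r s hrs
    exact measure_mono (fun z hz => ⟨hz.1, hz.2.trans hrs⟩)
  have heq : {x : EuclideanSpace ℝ (Fin n) |
      ∀ r : ℝ, 0 < r → r < δ → f x r ≤ ENNReal.ofReal (ε * r ^ m)} =
      ⋂ (q : ℚ) (_ : 0 < (q : ℝ) ∧ (q : ℝ) < δ),
        {x | f x q ≤ ENNReal.ofReal (ε * (q : ℝ) ^ m)} := by
    ext x
    simp only [mem_setOf_eq, mem_iInter]
    constructor
    · intro h q hq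
      exact h q hq.1 hq.2
    · intro h r hr hrδ
      -- choose a sequence of rationals qₖ with r < qₖ < min (r + 1/(k+1)) δ
      have hlt : ∀ k : ℕ, r < min (r + 1 / (k + 1 : ℝ)) δ := by
        intro k
        refine lt_min ?_ hrδ
        have : (0 : ℝ) < 1 / (k + 1 : ℝ) := by positivity
        linarith
      choose q hq1 hq2 using fun k => exists_rat_btwn (hlt k)
      have hqδ : ∀ k, (q k : ℝ) < δ := fun k => (hq2 k).trans_le (min_le_right _ _)
      have hq0 : ∀ k, 0 < (q k : ℝ) := fun k => hr.trans (hq1 k)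
      have htend : Tendsto (fun k => (q k : ℝ)) atTop (𝓝 r) := by
        have hup : Tendsto (fun k : ℕ => r + 1 / (k + 1 : ℝ)) atTop (𝓝 r) := by
          have := tendsto_one_div_add_atTop_nhds_zero_nat (𝕜 := ℝ)
          simpa using tendsto_const_nhds.add this
        refine tendsto_of_tendsto_of_tendsto_of_le_of_le tendsto_const_nhds hup
          (fun k => (hq1 k).le) (fun k => ((hq2 k).trans_le (min_le_left _ _)).le)
      have htend2 : Tendsto (fun k => ENNReal.ofReal (ε * (q k : ℝ) ^ m)) atTop
          (𝓝 (ENNReal.ofReal (ε * r ^ m))) := by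
        apply ENNReal.tendsto_ofReal
        exact (tendsto_const_nhds.mul (htend.pow m))
      refine ge_of_tendsto htend2 (Eventually.of_forall fun k => ?_)
      exact le_trans (hmono x r (q k) (hq1 k).le) (h (q k) ⟨hq0 k, hqδ k⟩)
  rw [heq]
  refine MeasurableSet.iInter fun q => MeasurableSet.iInter fun _ => ?_
  exact measurableSet_le (key q) measurable_const
end

section
/- Let σ : ℝ^n × ℝ^m → ℝ̄ (extended reals) be a Lebesgue-measurable function and let z₀ ∈ ℝ^m be a fixed point. Then the functions x ↦ ap limsup_{z→z₀} σ(x,z) and x ↦ ap liminf_{z→z₀} σ(x,z) are Lebesgue-measurable functions of x ∈ ℝ^n. -/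
open MeasureTheory Metric Filter Set Function
open scoped Topology ENNReal NNReal

/-- `Y` has density `d` at the point `x` with respect to the measure `μ`. -/
def HasDensityAt {X : Type*} [PseudoMetricSpace X] [MeasurableSpace X]
    (μ : Measure X) (Y : Set X) (x : X) (d : ℝ≥0∞) : Prop :=
  Tendsto (fun r : ℝ => μ (Y ∩ ball x r) / μ (ball x r)) (𝓝[>] (0 : ℝ)) (𝓝 d)

/-- The approximate upper limit of `h : ℝ^m → ℝ̄` at `z₀`: the greatest lower bound of
the set of all real numbers `s` for which `{z : h z > s}` has density `0` at `z₀`. -/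
noncomputable def apLimsupAt {m : ℕ} (h : EuclideanSpace ℝ (Fin m) → EReal)
    (z₀ : EuclideanSpace ℝ (Fin m)) : EReal :=
  sInf {s : EReal | ∃ t : ℝ, (t : EReal) = s ∧
    HasDensityAt volume {z : EuclideanSpace ℝ (Fin m) | (t : EReal) < h z} z₀ 0}

/-- The approximate lower limit of `h` at `z₀`. -/
noncomputable def apLiminfAt {m : ℕ} (h : EuclideanSpace ℝ (Fin m) → EReal)
    (z₀ : EuclideanSpace ℝ (Fin m)) : EReal :=
  - apLimsupAt (fun z => - h z) z₀

/-- Right-continuity (in fact continuity from the right suffices) of the volume of balls. -/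
lemma tendsto_vol_ball_aux {m : ℕ} (z₀ : EuclideanSpace ℝ (Fin m)) {r : ℝ} (hr : 0 < r) :
    Tendsto (fun s => volume (ball z₀ s)) (𝓝[>] r) (𝓝 (volume (ball z₀ r))) := by
  rcases subsingleton_or_nontrivial (EuclideanSpace ℝ (Fin m)) with hs | hn
  · have hb : ∀ s : ℝ, 0 < s → ball z₀ s = univ := by
      intro s hs'
      ext y
      simp [Subsingleton.elim y z₀, hs']
    rw [hb r hr]
    refine Tendsto.congr' ?_
      (tendsto_const_nhds (x := volume (univ : Set (EuclideanSpace ℝ (Fin m)))))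
    filter_upwards [self_mem_nhdsWithin] with s hs'
    rw [hb s (hr.trans hs')]
  · have H := tendsto_measure_biInter_gt (μ := volume) (s := fun s : ℝ => ball z₀ s) (a := r)
      (fun s _ => measurableSet_ball.nullMeasurableSet)
      (fun i j _ hij => ball_subset_ball hij)
      ⟨r + 1, by linarith, measure_ball_lt_top.ne⟩
    rw [← closedBall_eq_bInter_ball] at H
    rwa [Measure.addHaar_closedBall_eq_addHaar_ball] at H

/-- A countable characterization of having density zero. -/
lemma hasDensityAt_zero_iff_aux {m : ℕ} (z₀ : EuclideanSpace ℝ (Fin m))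
    (Y : Set (EuclideanSpace ℝ (Fin m))) :
    HasDensityAt volume Y z₀ 0 ↔
    ∀ k : ℕ, ∃ j : ℕ, ∀ q : ℚ, 0 < q → (q : ℝ) < 1 / (j + 1) →
      volume (Y ∩ ball z₀ q) / volume (ball z₀ q) ≤ 1 / (k + 1) := by
  constructor
  · intro H k
    have hε : (0 : ℝ≥0∞) < 1 / (k + 1) := by
      simp [ENNReal.div_pos_iff]
    have := (ENNReal.tendsto_nhds_zero.1 H) _ hε
    rw [(nhdsGT_basis (0 : ℝ)).eventually_iff] at this
    obtain ⟨δ, hδ, hδ'⟩ := this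
    obtain ⟨j, hj⟩ := exists_nat_one_div_lt hδ
    exact ⟨j, fun q hq hq' => hδ' ⟨by exact_mod_cast hq, hq'.trans hj⟩⟩
  · intro H
    refine ENNReal.tendsto_nhds_zero.2 fun ε hε => ?_
    obtain ⟨n, hn⟩ := ENNReal.exists_inv_nat_lt hε.ne'
    have hε' : (1 : ℝ≥0∞) / (n + 1) ≤ ε := by
      refine le_trans ?_ hn.le
      rw [one_div, ENNReal.inv_le_inv]
      exact_mod_cast Nat.le_succ n
    obtain ⟨j, hj⟩ := H n
    have hju : (0 : ℝ) < 1 / (j + 1) := by positivity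
    rw [(nhdsGT_basis (0 : ℝ)).eventually_iff]
    refine ⟨1 / (j + 1), hju, fun r hr => ?_⟩
    obtain ⟨hr0, hr1⟩ := hr
    have hb0 : volume (ball z₀ r) ≠ 0 := (measure_ball_pos volume z₀ hr0).ne'
    have hbt : volume (ball z₀ r) ≠ ∞ := measure_ball_lt_top.ne
    rw [ENNReal.div_le_iff hb0 hbt]
    have key : volume (Y ∩ ball z₀ r) ≤ 1 / (n + 1) * volume (ball z₀ r) := by
      have hcont : Tendsto (fun s => 1 / ((n : ℝ≥0∞) + 1) * volume (ball z₀ s)) (𝓝[>] r)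
          (𝓝 (1 / (n + 1) * volume (ball z₀ r))) :=
        ENNReal.Tendsto.const_mul (tendsto_vol_ball_aux z₀ hr0) (Or.inr (by simp))
      refine ge_of_tendsto hcont ?_
      filter_upwards [Ioo_mem_nhdsGT_of_mem ⟨le_refl r, hr1⟩] with s hs
      obtain ⟨q, hq1, hq2⟩ := exists_rat_btwn hs.1
      have hq0 : (0 : ℚ) < q := by exact_mod_cast hr0.trans hq1
      have hqj : (q : ℝ) < 1 / (j + 1) := hq2.trans hs.2
      have h1 := hj q hq0 hqj
      have hb0q : volume (ball z₀ (q : ℝ)) ≠ 0 :=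
        (measure_ball_pos volume z₀ (by exact_mod_cast hq0)).ne'
      rw [ENNReal.div_le_iff hb0q measure_ball_lt_top.ne] at h1
      calc volume (Y ∩ ball z₀ r) ≤ volume (Y ∩ ball z₀ (q : ℝ)) :=
            measure_mono (inter_subset_inter_right _ (ball_subset_ball hq1.le))
        _ ≤ 1 / (n + 1) * volume (ball z₀ (q : ℝ)) := h1
        _ ≤ 1 / (n + 1) * volume (ball z₀ s) :=
            mul_le_mul_right (measure_mono (ball_subset_ball hq2.le)) _
    exact key.trans (mul_le_mul_left hε' _)

/-- Having density zero is antitone in the set. -/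
lemma hasDensityAt_zero_mono_aux {X : Type*} [PseudoMetricSpace X] [MeasurableSpace X]
    {μ : Measure X} {Y Y' : Set X} {x : X} (h : Y' ⊆ Y) (hY : HasDensityAt μ Y x 0) :
    HasDensityAt μ Y' x 0 :=
  tendsto_of_tendsto_of_tendsto_of_le_of_le tendsto_const_nhds hY (fun _ => zero_le)
    (fun _ => ENNReal.div_le_div_right (measure_mono (inter_subset_inter_left _ h)) _)

open scoped Classical in
/-- The approximate upper limit as a countable infimum over rational levels. -/
lemma apLimsupAt_eq_aux {m : ℕ} (h : EuclideanSpace ℝ (Fin m) → EReal)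
    (z₀ : EuclideanSpace ℝ (Fin m)) :
    apLimsupAt h z₀ = ⨅ q : ℚ,
      (if HasDensityAt volume {z | ((q : ℝ) : EReal) < h z} z₀ 0
        then ((q : ℝ) : EReal) else ⊤) := by
  refine le_antisymm (le_iInf fun q => ?_) ?_
  · split_ifs with hq
    · exact sInf_le ⟨(q : ℝ), rfl, hq⟩
    · exact le_top
  · refine le_sInf fun s hs => ?_
    obtain ⟨t, rfl, ht⟩ := hs
    by_contra hc
    obtain ⟨q, hq1, hq2⟩ := EReal.exists_rat_btwn_of_lt (lt_of_not_ge hc)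
    have hqS : HasDensityAt volume {z | ((q : ℝ) : EReal) < h z} z₀ 0 :=
      hasDensityAt_zero_mono_aux (fun z hz => lt_trans hq1 hz) ht
    have := iInf_le (fun q : ℚ =>
      (if HasDensityAt volume {z | ((q : ℝ) : EReal) < h z} z₀ 0
        then ((q : ℝ) : EReal) else ⊤)) q
    rw [if_pos hqS] at this
    exact absurd (this.trans_lt hq2) (lt_irrefl _)

/-- Main auxiliary result: measurability of the approximate upper limit. -/
lemma measurable_apLimsup_aux {n m : ℕ}
    (σ : EuclideanSpace ℝ (Fin n) × EuclideanSpace ℝ (Fin m) → EReal)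
    (hσ : Measurable σ) (z₀ : EuclideanSpace ℝ (Fin m)) :
    Measurable (fun x : EuclideanSpace ℝ (Fin n) => apLimsupAt (fun z => σ (x, z)) z₀) := by
  classical
  have key : ∀ q : ℚ, MeasurableSet {x : EuclideanSpace ℝ (Fin n) |
      HasDensityAt volume {z | ((q : ℝ) : EReal) < σ (x, z)} z₀ 0} := by
    intro q
    have hmeas : ∀ r : ℝ, Measurable (fun x : EuclideanSpace ℝ (Fin n) =>
        volume ({z | ((q : ℝ) : EReal) < σ (x, z)} ∩ ball z₀ r) / volume (ball z₀ r)) := by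
      intro r
      have hE : MeasurableSet ({p | ((q : ℝ) : EReal) < σ p} ∩
          (univ ×ˢ ball z₀ r) : Set (EuclideanSpace ℝ (Fin n) × EuclideanSpace ℝ (Fin m))) :=
        (measurableSet_lt measurable_const hσ).inter (MeasurableSet.univ.prod measurableSet_ball)
      have h1 : Measurable fun x : EuclideanSpace ℝ (Fin n) =>
          volume (Prod.mk x ⁻¹' ({p | ((q : ℝ) : EReal) < σ p} ∩ (univ ×ˢ ball z₀ r))) :=
        measurable_measure_prodMk_left hE
      have h2 : ∀ x : EuclideanSpace ℝ (Fin n),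
          Prod.mk x ⁻¹' ({p | ((q : ℝ) : EReal) < σ p} ∩ (univ ×ˢ ball z₀ r)) =
          {z | ((q : ℝ) : EReal) < σ (x, z)} ∩ ball z₀ r := by
        intro x; ext z; simp [Set.mem_prod]
      simp_rw [h2] at h1
      exact h1.div_const _
    have : {x : EuclideanSpace ℝ (Fin n) |
        HasDensityAt volume {z | ((q : ℝ) : EReal) < σ (x, z)} z₀ 0} =
        ⋂ k : ℕ, ⋃ j : ℕ, ⋂ q' : ℚ, ⋂ (_ : 0 < q'), ⋂ (_ : (q' : ℝ) < 1 / (j + 1)),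
          {x | volume ({z | ((q : ℝ) : EReal) < σ (x, z)} ∩ ball z₀ q') /
            volume (ball z₀ q') ≤ 1 / (k + 1)} := by
      ext x
      simp only [mem_setOf_eq, hasDensityAt_zero_iff_aux, mem_iInter, mem_iUnion]
    rw [this]
    refine MeasurableSet.iInter fun k => MeasurableSet.iUnion fun j =>
      MeasurableSet.iInter fun q' => MeasurableSet.iInter fun _ =>
      MeasurableSet.iInter fun _ => ?_
    exact measurableSet_le (hmeas _) measurable_const
  have : (fun x : EuclideanSpace ℝ (Fin n) => apLimsupAt (fun z => σ (x, z)) z₀) =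
      fun x => ⨅ q : ℚ,
        (if HasDensityAt volume {z | ((q : ℝ) : EReal) < σ (x, z)} z₀ 0
          then ((q : ℝ) : EReal) else ⊤) := by
    funext x
    exact apLimsupAt_eq_aux _ z₀
  rw [this]
  exact Measurable.iInf fun q => Measurable.ite (key q) measurable_const measurable_const

/-- If `σ : ℝ^n × ℝ^m → ℝ̄` is measurable then the approximate upper and lower limits
`x ↦ ap limsup_{z→z₀} σ(x,z)` and `x ↦ ap liminf_{z→z₀} σ(x,z)` are measurable in `x`. -/
theorem measurable_apLimsup_apLiminf {n m : ℕ}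
    (σ : EuclideanSpace ℝ (Fin n) × EuclideanSpace ℝ (Fin m) → EReal)
    (hσ : Measurable σ) (z₀ : EuclideanSpace ℝ (Fin m)) :
    Measurable (fun x : EuclideanSpace ℝ (Fin n) => apLimsupAt (fun z => σ (x, z)) z₀) ∧
    Measurable (fun x : EuclideanSpace ℝ (Fin n) => apLiminfAt (fun z => σ (x, z)) z₀) := by
  refine ⟨measurable_apLimsup_aux σ hσ z₀, ?_⟩
  have h2 := measurable_apLimsup_aux (fun p => - σ p) hσ.neg z₀
  exact h2.neg
end

section
/- Let E ⊆ ℝ^n be a Lebesgue-measurable set, let (M, d) be a complete separable metric space, and let f : E → M be a measurable mapping such that ap limsup_{x→g} d(f(x), f(g))/|x − g| < ∞ for every point g ∈ E. Then there is a sequence of pairwise disjoint measurable sets E₀, E₁, E₂, … with E = E₀ ∪ ⋃_{i≥1} E_i, λ(E₀) = 0, and such that every restriction f|_{E_i}, i ≥ 1, is a Lipschitz mapping. -/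
open MeasureTheory Metric Filter Set Function
open scoped Topology ENNReal NNReal

namespace StepanovAux

/-- the measure of the unit ball -/
noncomputable def volB (n : ℕ) : ℝ≥0∞ := volume (ball (0 : EuclideanSpace ℝ (Fin n)) 1)

/-- the small density constant -/
noncomputable def cst (n : ℕ) : ℝ≥0∞ := (4 * 2 ^ n)⁻¹

lemma volB_ne_zero (n : ℕ) : volB n ≠ 0 := (measure_ball_pos _ _ one_pos).ne'
lemma volB_ne_top (n : ℕ) : volB n ≠ ∞ := measure_ball_lt_top.ne
lemma cst_ne_zero (n : ℕ) : cst n ≠ 0 := by simp [cst, ENNReal.mul_eq_top]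
lemma cst_ne_top (n : ℕ) : cst n ≠ ∞ := by simp [cst]
lemma cst_le_one (n : ℕ) : cst n ≤ 1 := by
  rw [cst, ENNReal.inv_le_one]
  exact le_trans (by norm_num) (le_mul_of_one_le_right (by norm_num)
    (one_le_pow_of_one_le' (by norm_num) _))

lemma cst_key (n : ℕ) : (3 : ℝ≥0∞) * cst n * 2 ^ n < 1 := by
  rw [cst, ENNReal.mul_inv (by norm_num) (by simp)]
  calc (3:ℝ≥0∞) * (4⁻¹ * (2^n)⁻¹) * 2^n = 3 * 4⁻¹ * ((2^n)⁻¹ * 2^n) := by ring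
  _ = 3 * 4⁻¹ := by rw [ENNReal.inv_mul_cancel (by simp) (by simp), mul_one]
  _ < 1 := by
      rw [show (3:ℝ≥0∞) * 4⁻¹ = 3/4 from rfl, ENNReal.div_lt_iff (by norm_num) (by norm_num)]
      norm_num

lemma ball_vol {n : ℕ} (x : EuclideanSpace ℝ (Fin n)) {r : ℝ} (hr : 0 < r) :
    volume (ball x r) = ENNReal.ofReal (r ^ n) * volB n := by
  simpa [finrank_euclideanSpace_fin, volB] using
    Measure.addHaar_ball_of_pos (volume : Measure (EuclideanSpace ℝ (Fin n))) x hr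

lemma closedBall_vol {n : ℕ} (x : EuclideanSpace ℝ (Fin n)) {r : ℝ} (hr : 0 ≤ r) :
    volume (closedBall x r) = ENNReal.ofReal (r ^ n) * volB n := by
  simpa [finrank_euclideanSpace_fin, volB] using
    Measure.addHaar_closedBall (volume : Measure (EuclideanSpace ℝ (Fin n))) x hr

variable {n : ℕ} {M : Type*} [MetricSpace M]

/-- the set of points of `E` near `g` where the difference quotient of `F` exceeds `j` -/
def Bad (E : Set (EuclideanSpace ℝ (Fin n))) (F : EuclideanSpace ℝ (Fin n) → M) (j : ℕ)
    (g : EuclideanSpace ℝ (Fin n)) : Set (EuclideanSpace ℝ (Fin n)) :=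
  {x | x ∈ E ∧ (j : ℝ) * dist x g < dist (F x) (F g)}

/-- points of `E` where at scale `q` both the `Bad` set and the complement of `E` are small -/
def P (E : Set (EuclideanSpace ℝ (Fin n))) (F : EuclideanSpace ℝ (Fin n) → M) (j : ℕ) (q : ℚ) :
    Set (EuclideanSpace ℝ (Fin n)) :=
  {g | g ∈ E ∧
    volume (Bad E F j g ∩ ball g (q : ℝ)) ≤ cst n * ENNReal.ofReal ((q:ℝ) ^ n) * volB n ∧
    volume (ball g (q : ℝ) \ E) ≤ cst n * ENNReal.ofReal ((q:ℝ) ^ n) * volB n}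

/-- points of `E` satisfying the above for all rational scales below `1/(k+1)` -/
def T (E : Set (EuclideanSpace ℝ (Fin n))) (F : EuclideanSpace ℝ (Fin n) → M) (j k : ℕ) :
    Set (EuclideanSpace ℝ (Fin n)) :=
  {g | ∀ q : ℚ, 0 < (q : ℝ) → (q : ℝ) < 1 / ((k : ℝ) + 1) → g ∈ P E F j q}

section meas
variable [TopologicalSpace.SeparableSpace M] [MeasurableSpace M] [BorelSpace M]

lemma P_measurable (E : Set (EuclideanSpace ℝ (Fin n))) (hE : MeasurableSet E)
    (F : EuclideanSpace ℝ (Fin n) → M) (hF : Measurable F) (j : ℕ) (q : ℚ) :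
    MeasurableSet (P E F j q) := by
  haveI : SecondCountableTopology M := UniformSpace.secondCountable_of_separable M
  have m1 : Measurable fun g : EuclideanSpace ℝ (Fin n) =>
      volume (Bad E F j g ∩ ball g (q : ℝ)) := by
    have hs : MeasurableSet {p : EuclideanSpace ℝ (Fin n) × EuclideanSpace ℝ (Fin n) |
        p.2 ∈ E ∧ (j : ℝ) * dist p.2 p.1 < dist (F p.2) (F p.1) ∧ dist p.2 p.1 < (q : ℝ)} := by
      refine (hE.preimage measurable_snd).inter (MeasurableSet.inter ?_ ?_)
      · exact measurableSet_lt (measurable_const.mul (measurable_snd.dist measurable_fst))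
          ((hF.comp measurable_snd).dist (hF.comp measurable_fst))
      · exact measurableSet_lt (measurable_snd.dist measurable_fst) measurable_const
    have h := measurable_measure_prodMk_left (ν := (volume : Measure (EuclideanSpace ℝ (Fin n)))) hs
    have heq : (fun g : EuclideanSpace ℝ (Fin n) => volume (Bad E F j g ∩ ball g (q : ℝ)))
        = fun g => volume (Prod.mk g ⁻¹' {p : EuclideanSpace ℝ (Fin n) × EuclideanSpace ℝ (Fin n) |
          p.2 ∈ E ∧ (j : ℝ) * dist p.2 p.1 < dist (F p.2) (F p.1) ∧ dist p.2 p.1 < (q : ℝ)}) := by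
      funext g
      congr 1
      ext x
      simp only [Bad, mem_inter_iff, mem_setOf_eq, mem_ball, mem_preimage]
      tauto
    rw [heq]; exact h
  have m2 : Measurable fun g : EuclideanSpace ℝ (Fin n) => volume (ball g (q : ℝ) \ E) := by
    have hs : MeasurableSet {p : EuclideanSpace ℝ (Fin n) × EuclideanSpace ℝ (Fin n) |
        dist p.2 p.1 < (q : ℝ) ∧ p.2 ∉ E} :=
      (measurableSet_lt (measurable_snd.dist measurable_fst) measurable_const).inter
        ((hE.preimage measurable_snd).compl)
    have h := measurable_measure_prodMk_left (ν := (volume : Measure (EuclideanSpace ℝ (Fin n)))) hs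
    have heq : (fun g : EuclideanSpace ℝ (Fin n) => volume (ball g (q : ℝ) \ E))
        = fun g => volume (Prod.mk g ⁻¹' {p : EuclideanSpace ℝ (Fin n) × EuclideanSpace ℝ (Fin n) |
          dist p.2 p.1 < (q : ℝ) ∧ p.2 ∉ E}) := by
      funext g
      congr 1
    rw [heq]; exact h
  have : P E F j q = E ∩ ({g | volume (Bad E F j g ∩ ball g (q : ℝ)) ≤
      cst n * ENNReal.ofReal ((q:ℝ) ^ n) * volB n} ∩
      {g | volume (ball g (q : ℝ) \ E) ≤ cst n * ENNReal.ofReal ((q:ℝ) ^ n) * volB n}) := by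
    ext g; simp only [P, mem_setOf_eq, mem_inter_iff]
  rw [this]
  exact hE.inter ((measurableSet_le m1 measurable_const).inter
    (measurableSet_le m2 measurable_const))

lemma T_measurable (E : Set (EuclideanSpace ℝ (Fin n))) (hE : MeasurableSet E)
    (F : EuclideanSpace ℝ (Fin n) → M) (hF : Measurable F) (j k : ℕ) :
    MeasurableSet (T E F j k) := by
  have : T E F j k = ⋂ (q : ℚ), ⋂ (_ : 0 < (q:ℝ)), ⋂ (_ : (q:ℝ) < 1 / ((k:ℝ)+1)), P E F j q := by
    ext g; simp [T, mem_iInter]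
  rw [this]
  exact MeasurableSet.iInter fun q => MeasurableSet.iInter fun _ =>
    MeasurableSet.iInter fun _ => P_measurable E hE F hF j q
end meas

lemma T_subset (E : Set (EuclideanSpace ℝ (Fin n))) (F : EuclideanSpace ℝ (Fin n) → M)
    (j k : ℕ) : T E F j k ⊆ E := by
  obtain ⟨q, hq0, hq1⟩ := exists_rat_btwn (show (0:ℝ) < 1 / ((k:ℝ)+1) by positivity)
  exact fun g hg => (hg q hq0 hq1).1

/-- passage from rational scales to real scales -/
lemma rat_to_real {X : Set (EuclideanSpace ℝ (Fin n))} {g : EuclideanSpace ℝ (Fin n)}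
    {δ r : ℝ} (hr0 : 0 < r) (hrδ : r < δ)
    (h : ∀ q : ℚ, 0 < (q:ℝ) → (q:ℝ) < δ →
      volume (X ∩ ball g (q:ℝ)) ≤ cst n * ENNReal.ofReal ((q:ℝ)^n) * volB n) :
    volume (X ∩ ball g r) ≤ cst n * ENNReal.ofReal (r^n) * volB n := by
  have hseq : ∀ m : ℕ, ∃ q : ℚ, r < (q:ℝ) ∧ (q:ℝ) < min δ (r + 1/(m+1)) := by
    intro m
    have hm : (0:ℝ) < 1/(m+1) := by positivity
    exact exists_rat_btwn (lt_min hrδ (by linarith))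
  choose q hq1 hq2 using hseq
  have hbound : ∀ m : ℕ, volume (X ∩ ball g r) ≤
      cst n * ENNReal.ofReal ((r + 1/(m+1))^n) * volB n := by
    intro m
    have h1 : volume (X ∩ ball g r) ≤ volume (X ∩ ball g (q m : ℝ)) :=
      measure_mono (inter_subset_inter_right _ (ball_subset_ball (hq1 m).le))
    have h2 := h (q m) (hr0.trans (hq1 m)) ((hq2 m).trans_le (min_le_left _ _))
    refine h1.trans (h2.trans ?_)
    have hle : ((q m : ℝ)) ≤ r + 1/(m+1) := ((hq2 m).trans_le (min_le_right _ _)).le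
    have hpos : (0:ℝ) ≤ (q m : ℝ) := (hr0.trans (hq1 m)).le
    gcongr
  have htend : Tendsto (fun m : ℕ => cst n * ENNReal.ofReal ((r + 1/(m+1))^n) * volB n) atTop
      (𝓝 (cst n * ENNReal.ofReal (r^n) * volB n)) := by
    have h0 : Tendsto (fun m : ℕ => r + 1/(m+1:ℝ)) atTop (𝓝 r) := by
      have := tendsto_one_div_add_atTop_nhds_zero_nat (𝕜 := ℝ)
      simpa using tendsto_const_nhds.add this
    have h1 : Tendsto (fun m : ℕ => ENNReal.ofReal ((r + 1/(m+1))^n)) atTop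
        (𝓝 (ENNReal.ofReal (r^n))) := ENNReal.tendsto_ofReal (h0.pow n)
    exact ENNReal.Tendsto.mul_const
      (ENNReal.Tendsto.const_mul h1 (Or.inr (cst_ne_top n))) (Or.inr (volB_ne_top n))
  exact ge_of_tendsto htend (Eventually.of_forall hbound)

/-- the key Lipschitz estimate on `T` -/
lemma lip_on_T (E : Set (EuclideanSpace ℝ (Fin n))) (F : EuclideanSpace ℝ (Fin n) → M)
    (j k : ℕ) {g g' : EuclideanSpace ℝ (Fin n)} (hg : g ∈ T E F j k) (hg' : g' ∈ T E F j k)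
    (hd : dist g g' < 1 / ((k:ℝ) + 1)) :
    dist (F g) (F g') ≤ 2 * (j:ℝ) * dist g g' := by
  rcases eq_or_ne g g' with rfl | hne
  · simp
  have hgE : g ∈ E := T_subset E F j k hg
  have hg'E : g' ∈ E := T_subset E F j k hg'
  set r := dist g g' with hrdef
  have hr0 : 0 < r := dist_pos.2 hne
  have hBadg : volume (Bad E F j g ∩ ball g r) ≤ cst n * ENNReal.ofReal (r^n) * volB n :=
    rat_to_real hr0 hd fun q hq0 hq1 => (hg q hq0 hq1).2.1
  have hBadg' : volume (Bad E F j g' ∩ ball g' r) ≤ cst n * ENNReal.ofReal (r^n) * volB n := by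
    have hd' : dist g' g < 1 / ((k:ℝ) + 1) := by rwa [dist_comm]
    have := rat_to_real (X := Bad E F j g') (g := g') (dist_pos.2 hne.symm) hd'
      (fun q hq0 hq1 => (hg' q hq0 hq1).2.1)
    rwa [show dist g' g = r by rw [dist_comm]] at this
  have hOut : volume (Eᶜ ∩ ball g r) ≤ cst n * ENNReal.ofReal (r^n) * volB n := by
    refine rat_to_real hr0 hd fun q hq0 hq1 => ?_
    have := (hg q hq0 hq1).2.2
    rwa [show ball g (q:ℝ) \ E = Eᶜ ∩ ball g (q:ℝ) by rw [diff_eq, inter_comm]] at this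
  set m := midpoint ℝ g g' with hmdef
  have hmg : dist m g = r / 2 := by
    rw [hmdef, dist_comm, dist_left_midpoint, Real.norm_ofNat]; rw [hrdef]; ring
  have hmg' : dist m g' = r / 2 := by
    rw [hmdef, midpoint_comm, dist_comm, dist_left_midpoint, Real.norm_ofNat]
    rw [hrdef, dist_comm]; ring
  have hWg : ball m (r/2) ⊆ ball g r := by
    intro x hx
    rw [mem_ball] at hx ⊢
    have := dist_triangle x m g
    rw [hmg] at this; linarith
  have hWg' : ball m (r/2) ⊆ ball g' r := by
    intro x hx
    rw [mem_ball] at hx ⊢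
    have := dist_triangle x m g'
    rw [hmg'] at this; linarith
  have hWvol : volume (ball g r) = 2^n * volume (ball m (r/2)) := by
    rw [ball_vol g hr0, ball_vol m (by positivity), ← mul_assoc]
    congr 1
    rw [show ((2:ℝ≥0∞)^n) = ENNReal.ofReal ((2:ℝ)^n) by
      rw [ENNReal.ofReal_pow (by norm_num)]; norm_num]
    rw [← ENNReal.ofReal_mul (by positivity)]
    congr 1
    rw [← mul_pow]
    ring_nf
  have hW0 : volume (ball m (r/2)) ≠ 0 := (measure_ball_pos _ _ (by positivity)).ne'
  have hWt : volume (ball m (r/2)) ≠ ∞ := measure_ball_lt_top.ne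
  have hex : ∃ x, x ∈ ball m (r/2) ∧ x ∈ E ∧ x ∉ Bad E F j g ∧ x ∉ Bad E F j g' := by
    by_contra hcon
    push_neg at hcon
    have hsub : ball m (r/2) ⊆
        (Eᶜ ∩ ball g r) ∪ (Bad E F j g ∩ ball g r) ∪ (Bad E F j g' ∩ ball g' r) := by
      intro x hx
      by_cases hxE : x ∈ E
      · by_cases hxb : x ∈ Bad E F j g
        · exact Or.inl (Or.inr ⟨hxb, hWg hx⟩)
        · exact Or.inr ⟨hcon x hx hxE hxb, hWg' hx⟩
      · exact Or.inl (Or.inl ⟨hxE, hWg hx⟩)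
    have h1 : volume (ball m (r/2)) ≤ 3 * (cst n * ENNReal.ofReal (r^n) * volB n) := by
      calc volume (ball m (r/2)) ≤
          volume ((Eᶜ ∩ ball g r) ∪ (Bad E F j g ∩ ball g r) ∪ (Bad E F j g' ∩ ball g' r)) :=
            measure_mono hsub
      _ ≤ volume (Eᶜ ∩ ball g r) + volume (Bad E F j g ∩ ball g r) +
          volume (Bad E F j g' ∩ ball g' r) :=
            le_trans (measure_union_le _ _) (by gcongr; exact measure_union_le _ _)
      _ ≤ (cst n * ENNReal.ofReal (r^n) * volB n) + (cst n * ENNReal.ofReal (r^n) * volB n) +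
          (cst n * ENNReal.ofReal (r^n) * volB n) := by gcongr
      _ = 3 * (cst n * ENNReal.ofReal (r^n) * volB n) := by ring
    have h2 : cst n * ENNReal.ofReal (r^n) * volB n = cst n * (2^n * volume (ball m (r/2))) := by
      rw [mul_assoc, ← ball_vol g hr0, hWvol]
    have h3 : volume (ball m (r/2)) ≤ 3 * cst n * 2^n * volume (ball m (r/2)) := by
      calc volume (ball m (r/2)) ≤ 3 * (cst n * (2^n * volume (ball m (r/2)))) := by rw [← h2]; exact h1
      _ = 3 * cst n * 2^n * volume (ball m (r/2)) := by ring
    have hlt : 3 * cst n * 2^n * volume (ball m (r/2)) < 1 * volume (ball m (r/2)) :=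
      by rw [mul_comm _ (volume _), mul_comm 1]; exact ENNReal.mul_lt_mul_right hW0 hWt (cst_key n)
    rw [one_mul] at hlt
    exact lt_irrefl _ (lt_of_le_of_lt h3 hlt)
  obtain ⟨x, hxW, hxE, hxg, hxg'⟩ := hex
  have e1 : dist (F x) (F g) ≤ (j:ℝ) * dist x g := by
    have h' : ¬ ((j:ℝ) * dist x g < dist (F x) (F g)) := fun h => hxg ⟨hxE, h⟩
    linarith [not_lt.1 h']
  have e2 : dist (F x) (F g') ≤ (j:ℝ) * dist x g' := by
    have h' : ¬ ((j:ℝ) * dist x g' < dist (F x) (F g')) := fun h => hxg' ⟨hxE, h⟩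
    linarith [not_lt.1 h']
  have hd1 : dist x g ≤ r := (mem_ball.1 (hWg hxW)).le
  have hd2 : dist x g' ≤ r := (mem_ball.1 (hWg' hxW)).le
  calc dist (F g) (F g') ≤ dist (F g) (F x) + dist (F x) (F g') := dist_triangle _ _ _
  _ = dist (F x) (F g) + dist (F x) (F g') := by rw [dist_comm (F g) (F x)]
  _ ≤ (j:ℝ) * dist x g + (j:ℝ) * dist x g' := add_le_add e1 e2
  _ ≤ (j:ℝ) * r + (j:ℝ) * r := by
      have hj : (0:ℝ) ≤ (j:ℝ) := Nat.cast_nonneg j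
      gcongr
  _ = 2 * (j:ℝ) * r := by ring

end StepanovAux

open StepanovAux

/-- If `f : E → M` is measurable with finite approximate upper dilatation at every point
of `E`, then `E` decomposes into a null set `A 0` and countably many disjoint measurable
sets on each of which `f` is Lipschitz. -/
theorem exists_countable_lipschitz_decomposition {n : ℕ} {M : Type*}
    [MetricSpace M] [CompleteSpace M] [TopologicalSpace.SeparableSpace M]
    [MeasurableSpace M] [BorelSpace M]
    (E : Set (EuclideanSpace ℝ (Fin n))) (hE : MeasurableSet E)
    (f : EuclideanSpace ℝ (Fin n) → M) (hf : Measurable (fun x : E => f x))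
    (hap : ∀ g ∈ E, ∃ s : ℝ,
      HasDensityAt volume {x ∈ E | s < dist (f x) (f g) / dist x g} g 0) :
    ∃ A : ℕ → Set (EuclideanSpace ℝ (Fin n)),
      Pairwise (Disjoint on A) ∧ (∀ i, MeasurableSet (A i)) ∧
      E = ⋃ i, A i ∧ volume (A 0) = 0 ∧
      ∀ i : ℕ, 1 ≤ i → ∃ C : ℝ≥0, LipschitzOnWith C f (A i) := by
  classical
  haveI : SecondCountableTopology M := UniformSpace.secondCountable_of_separable M
  set F : EuclideanSpace ℝ (Fin n) → M :=
    Function.extend ((↑) : E → EuclideanSpace ℝ (Fin n)) (fun x : E => f x) (fun _ => f 0)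
    with hFdef
  have hFmeas : Measurable F :=
    (MeasurableEmbedding.subtype_coe hE).measurable_extend hf measurable_const
  have hFeq : ∀ x ∈ E, F x = f x := by
    intro x hx
    have := Subtype.val_injective.extend_apply (fun x : E => f x) (fun _ => f 0) ⟨x, hx⟩
    simpa [hFdef] using this
  -- coverage claim
  have hcover : ∀ g ∈ E,
      Tendsto (fun r => volume (E ∩ closedBall g r) / volume (closedBall g r)) (𝓝[>] 0) (𝓝 1) →
      ∃ j k, g ∈ T E F j k := by
    intro g hgE hden
    obtain ⟨s, hs⟩ := hap g hgE
    set j := ⌈s⌉₊ with hj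
    have h1 : ∀ᶠ r in 𝓝[>] (0:ℝ),
        volume ({x ∈ E | s < dist (f x) (f g) / dist x g} ∩ ball g r) / volume (ball g r)
          < cst n :=
      hs.eventually (gt_mem_nhds (pos_iff_ne_zero.2 (cst_ne_zero n)))
    have h2 : ∀ᶠ r in 𝓝[>] (0:ℝ),
        (1 - cst n) < volume (E ∩ closedBall g r) / volume (closedBall g r) :=
      hden.eventually (lt_mem_nhds
        (ENNReal.sub_lt_self ENNReal.one_ne_top one_ne_zero (cst_ne_zero n)))
    obtain ⟨u, hu0, hu⟩ : ∃ u > 0, ∀ r : ℝ, 0 < r → r < u →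
        (volume ({x ∈ E | s < dist (f x) (f g) / dist x g} ∩ ball g r) / volume (ball g r)
          < cst n ∧
        (1 - cst n) < volume (E ∩ closedBall g r) / volume (closedBall g r)) := by
      have h3 := h1.and h2
      rw [eventually_iff, mem_nhdsGT_iff_exists_Ioo_subset] at h3
      obtain ⟨u, hu, hsub⟩ := h3
      exact ⟨u, hu, fun r ha hb => hsub ⟨ha, hb⟩⟩
    obtain ⟨k, hk⟩ := exists_nat_one_div_lt hu0
    refine ⟨j, k, fun q hq0 hq1 => ?_⟩
    have hqu : (q:ℝ) < u := hq1.trans hk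
    obtain ⟨hr1, hr2⟩ := hu q hq0 hqu
    have hb0 : volume (ball g (q:ℝ)) ≠ 0 := (measure_ball_pos _ _ hq0).ne'
    have hbt : volume (ball g (q:ℝ)) ≠ ∞ := measure_ball_lt_top.ne
    refine ⟨hgE, ?_, ?_⟩
    · -- bad set bound
      have hsb : Bad E F j g ∩ ball g (q:ℝ) ⊆
          ({x ∈ E | s < dist (f x) (f g) / dist x g} ∩ ball g (q:ℝ)) := by
        rintro x ⟨⟨hxE, hxb⟩, hxball⟩
        have hxg : x ≠ g := by
          rintro rfl
          rw [dist_self, dist_self, mul_zero] at hxb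
          exact lt_irrefl 0 hxb
        refine ⟨⟨hxE, ?_⟩, hxball⟩
        have hd0 : 0 < dist x g := dist_pos.2 hxg
        rw [lt_div_iff₀ hd0]
        calc s * dist x g ≤ (j:ℝ) * dist x g :=
              mul_le_mul_of_nonneg_right (Nat.le_ceil s) hd0.le
        _ < dist (F x) (F g) := hxb
        _ = dist (f x) (f g) := by rw [hFeq x hxE, hFeq g hgE]
      calc volume (Bad E F j g ∩ ball g (q:ℝ))
          ≤ volume ({x ∈ E | s < dist (f x) (f g) / dist x g} ∩ ball g (q:ℝ)) :=
            measure_mono hsb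
      _ ≤ cst n * volume (ball g (q:ℝ)) :=
            ((ENNReal.div_lt_iff (Or.inl hb0) (Or.inl hbt)).1 hr1).le
      _ = cst n * ENNReal.ofReal ((q:ℝ)^n) * volB n := by rw [ball_vol g hq0, ← mul_assoc]
    · -- complement bound
      have hcb0 : volume (closedBall g (q:ℝ)) ≠ 0 := (measure_closedBall_pos _ _ hq0).ne'
      have hcbt : volume (closedBall g (q:ℝ)) ≠ ∞ := measure_closedBall_lt_top.ne
      have hEcb : (1 - cst n) * volume (closedBall g (q:ℝ)) < volume (E ∩ closedBall g (q:ℝ)) :=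
        (ENNReal.lt_div_iff_mul_lt (Or.inl hcb0) (Or.inl hcbt)).1 hr2
      have key : volume (closedBall g (q:ℝ) \ E) ≤ cst n * volume (closedBall g (q:ℝ)) := by
        have hsum : volume (closedBall g (q:ℝ) ∩ E) + volume (closedBall g (q:ℝ) \ E)
            = volume (closedBall g (q:ℝ)) := measure_inter_add_diff _ hE
        have h5 : volume (closedBall g (q:ℝ)) ≤
            cst n * volume (closedBall g (q:ℝ)) + volume (closedBall g (q:ℝ) ∩ E) := by
          have heq : (1 - cst n) * volume (closedBall g (q:ℝ))
              + cst n * volume (closedBall g (q:ℝ)) = volume (closedBall g (q:ℝ)) := by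
            rw [← add_mul, tsub_add_cancel_of_le (cst_le_one n), one_mul]
          calc volume (closedBall g (q:ℝ))
              = (1 - cst n) * volume (closedBall g (q:ℝ))
                + cst n * volume (closedBall g (q:ℝ)) := heq.symm
          _ ≤ volume (E ∩ closedBall g (q:ℝ)) + cst n * volume (closedBall g (q:ℝ)) :=
                add_le_add_left hEcb.le _
          _ = cst n * volume (closedBall g (q:ℝ)) + volume (closedBall g (q:ℝ) ∩ E) := by
                rw [add_comm, inter_comm]
        have hdiff : volume (closedBall g (q:ℝ) \ E)
            = volume (closedBall g (q:ℝ)) - volume (closedBall g (q:ℝ) ∩ E) := by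
          rw [add_comm] at hsum
          exact ENNReal.eq_sub_of_add_eq (ne_top_of_le_ne_top hcbt
            (measure_mono inter_subset_left)) hsum
        rw [hdiff, tsub_le_iff_right]
        exact h5
      calc volume (ball g (q:ℝ) \ E) ≤ volume (closedBall g (q:ℝ) \ E) :=
            measure_mono (diff_subset_diff_left ball_subset_closedBall)
      _ ≤ cst n * volume (closedBall g (q:ℝ)) := key
      _ = cst n * ENNReal.ofReal ((q:ℝ)^n) * volB n := by rw [closedBall_vol g hq0.le, ← mul_assoc]
  -- dense sequence and pieces
  haveI : Nonempty (EuclideanSpace ℝ (Fin n)) := ⟨0⟩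
  set u : ℕ → EuclideanSpace ℝ (Fin n) := TopologicalSpace.denseSeq _ with hudef
  have hdense : DenseRange u := TopologicalSpace.denseRange_denseSeq _
  set S : ℕ × ℕ × ℕ → Set (EuclideanSpace ℝ (Fin n)) := fun p =>
    T E F p.1 p.2.1 ∩ ball (u p.2.2) (1 / (3 * ((p.2.1:ℝ) + 1))) with hSdef
  have hSmeas : ∀ p, MeasurableSet (S p) := fun p =>
    (T_measurable E hE F hFmeas _ _).inter measurableSet_ball
  have hSsub : ∀ p, S p ⊆ E := fun p => inter_subset_left.trans (T_subset E F _ _)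
  have hSlip : ∀ p : ℕ × ℕ × ℕ, ∀ g ∈ S p, ∀ g' ∈ S p,
      dist (f g) (f g') ≤ 2 * ((p.1:ℝ)) * dist g g' := by
    rintro p g hg g' hg'
    have hK : (0:ℝ) < (p.2.1:ℝ) + 1 := by positivity
    have h1 : dist g (u p.2.2) < 1 / (3 * ((p.2.1:ℝ) + 1)) := mem_ball.1 hg.2
    have h2 : dist g' (u p.2.2) < 1 / (3 * ((p.2.1:ℝ) + 1)) := mem_ball.1 hg'.2
    have hdd : dist g g' < 1 / ((p.2.1:ℝ) + 1) := by
      have ht : dist g g' ≤ dist g (u p.2.2) + dist (u p.2.2) g' := dist_triangle _ _ _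
      have h2' : dist (u p.2.2) g' < 1 / (3 * ((p.2.1:ℝ) + 1)) := by rwa [dist_comm]
      have h3 : 1 / (3 * ((p.2.1:ℝ) + 1)) + 1 / (3 * ((p.2.1:ℝ) + 1)) < 1 / ((p.2.1:ℝ) + 1) := by
        rw [← add_div, div_lt_div_iff₀ (by positivity) hK]
        ring_nf
        nlinarith
      linarith
    have := lip_on_T E F p.1 p.2.1 hg.1 hg'.1 hdd
    rwa [hFeq g (hSsub p hg), hFeq g' (hSsub p hg')] at this
  set eqv : ℕ ≃ ℕ × ℕ × ℕ := (Denumerable.eqv (ℕ × ℕ × ℕ)).symm with heqv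
  set Bs : ℕ → Set (EuclideanSpace ℝ (Fin n)) := fun i => S (eqv i) with hBs
  set U : Set (EuclideanSpace ℝ (Fin n)) := ⋃ i, Bs i with hU
  have hUS : ∀ p, S p ⊆ U := by
    intro p x hx
    exact mem_iUnion.2 ⟨eqv.symm p, by simpa [hBs, Equiv.apply_symm_apply] using hx⟩
  refine ⟨fun i => Nat.casesOn i (E \ U) (disjointed Bs), ?_, ?_, ?_, ?_, ?_⟩
  · -- pairwise disjoint
    intro i i' hne
    have hdisjU : ∀ m : ℕ, Disjoint (E \ U) (disjointed Bs m) := fun m =>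
      Set.disjoint_sdiff_left.mono_right ((disjointed_subset _ _).trans (subset_iUnion Bs m))
    match i, i' with
    | 0, 0 => exact absurd rfl hne
    | 0, (i'+1) => exact hdisjU i'
    | (i+1), 0 => exact (hdisjU i).symm
    | (i+1), (i'+1) =>
      exact disjoint_disjointed Bs (by omega : i ≠ i')
  · -- measurability
    intro i
    cases i with
    | zero => exact hE.diff (MeasurableSet.iUnion fun m => hSmeas _)
    | succ m => exact MeasurableSet.disjointed (fun m => hSmeas _) m
  · -- union
    apply Subset.antisymm
    · intro g hg
      by_cases hgU : g ∈ U
      · rw [hU, ← iUnion_disjointed] at hgU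
        obtain ⟨i, hi⟩ := mem_iUnion.1 hgU
        exact mem_iUnion.2 ⟨i + 1, hi⟩
      · exact mem_iUnion.2 ⟨0, hg, hgU⟩
    · refine iUnion_subset fun i => ?_
      cases i with
      | zero => exact diff_subset
      | succ m => exact (disjointed_subset _ _).trans (hSsub _)
  · -- null set
    have hae := Besicovitch.ae_tendsto_measure_inter_div (volume : Measure _) E
    have h0 : (volume.restrict E) {g : EuclideanSpace ℝ (Fin n) |
        ¬ Tendsto (fun r => volume (E ∩ closedBall g r) / volume (closedBall g r))
          (𝓝[>] 0) (𝓝 1)} = 0 := ae_iff.1 hae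
    have hsub : E \ U ⊆ {g : EuclideanSpace ℝ (Fin n) |
        ¬ Tendsto (fun r => volume (E ∩ closedBall g r) / volume (closedBall g r))
          (𝓝[>] 0) (𝓝 1)} ∩ E := by
      rintro g ⟨hgE, hgU⟩
      refine ⟨fun hT => ?_, hgE⟩
      obtain ⟨j, k, hjk⟩ := hcover g hgE hT
      obtain ⟨i, hi⟩ := hdense.exists_dist_lt g (show (0:ℝ) < 1 / (3 * ((k:ℝ)+1)) by positivity)
      exact hgU (hUS (j, k, i) ⟨hjk, mem_ball.2 hi⟩)
    exact le_antisymm (le_trans (measure_mono hsub)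
      (le_trans (Measure.le_restrict_apply _ _) h0.le)) zero_le
  · -- Lipschitz
    rintro (_|i) hi
    · exact absurd hi (by norm_num)
    · refine ⟨((2 * (eqv i).1 : ℕ) : ℝ≥0), ?_⟩
      have hsubS : disjointed Bs i ⊆ S (eqv i) := disjointed_subset _ _
      refine LipschitzOnWith.of_dist_le_mul fun x hx y hy => ?_
      have := hSlip (eqv i) x (hsubS hx) y (hsubS hy)
      calc dist (f x) (f y) ≤ 2 * (((eqv i).1 : ℝ)) * dist x y := this
      _ = (((2 * (eqv i).1 : ℕ) : ℝ≥0) : ℝ) * dist x y := by push_cast; ring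
end

section
/- Let (X, d) be a complete separable metric space and μ a Borel measure on X that is positive and finite on all balls and uniformly locally doubling, i.e. there are C < ∞ and R > 0 such that μ(B(x,2r)) ≤ C μ(B(x,r)) for all x ∈ X and 0 < r ≤ R. Assume moreover that there exist γ > 0 and r₀ > 0 such that μ(B(u,r) ∩ B(v,r)) ≥ γ μ(B(u,r)) whenever u, v ∈ X and r = d(u,v) ∈ (0, r₀). Let E ⊆ X be a measurable set with μ(E) < ∞, let (Y, d_Y) be a complete separable metric space, and let f : E → Y be a measurable mapping such that for every g ∈ E the approximate upper limit (with respect to μ-densities) ap limsup_{x→g} d_Y(f(x), f(g))/d(x,g) is finite. Then there is a sequence of pairwise disjoint measurable sets E₀, E₁, E₂, … with E = E₀ ∪ ⋃_{i≥1} E_i, μ(E₀) = 0, and such that every restriction f|_{E_i}, i ≥ 1, is a Lipschitz mapping. -/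
open MeasureTheory Metric Filter Set Function
open scoped Topology ENNReal NNReal

/-- If an estimate `μ (S ∩ ball g q) ≤ c * μ (ball g q)` holds for all rational radii
`q ∈ (0, δ)`, then it holds for all real radii in `(0, δ)`. -/
lemma rat_radius_bound {X : Type*} [MetricSpace X] [MeasurableSpace X]
    (μ : Measure X) (S : Set X) (g : X) (δ : ℝ) (c : ℝ≥0∞)
    (h : ∀ q : ℚ, 0 < (q : ℝ) → (q : ℝ) < δ → μ (S ∩ ball g q) ≤ c * μ (ball g q))
    (r : ℝ) (hrδ : r < δ) : μ (S ∩ ball g r) ≤ c * μ (ball g r) := by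
  have hU : S ∩ ball g r = ⋃ q : {q : ℚ // 0 < (q : ℝ) ∧ (q : ℝ) < r}, S ∩ ball g (q : ℝ) := by
    ext x
    simp only [mem_iUnion, mem_inter_iff, mem_ball]
    constructor
    · rintro ⟨hxS, hxb⟩
      obtain ⟨q, hq1, hq2⟩ := exists_rat_btwn hxb
      exact ⟨⟨q, dist_nonneg.trans_lt hq1, hq2⟩, hxS, hq1⟩
    · rintro ⟨⟨q, hq0, hqr⟩, hxS, hxq⟩
      exact ⟨hxS, hxq.trans hqr⟩
  have hdir : Directed (· ⊆ ·) (fun q : {q : ℚ // 0 < (q : ℝ) ∧ (q : ℝ) < r} =>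
      S ∩ ball g (q : ℝ)) := by
    rintro ⟨q₁, hq₁⟩ ⟨q₂, hq₂⟩
    refine ⟨⟨q₁ ⊔ q₂, ?_, ?_⟩, ?_, ?_⟩
    · push_cast; exact lt_max_of_lt_left hq₁.1
    · push_cast; exact max_lt hq₁.2 hq₂.2
    · exact inter_subset_inter_right _ (ball_subset_ball (by push_cast; exact le_max_left _ _))
    · exact inter_subset_inter_right _ (ball_subset_ball (by push_cast; exact le_max_right _ _))
  rw [hU, hdir.measure_iUnion]
  apply iSup_le
  rintro ⟨q, hq0, hqr⟩
  exact (h q hq0 (hqr.trans hrδ)).trans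
    (mul_le_mul_right (measure_mono (ball_subset_ball hqr.le)) c)

/-- Lipschitz decomposition of a mapping with a.e. finite approximate dilatation on a
complete separable metric space with a uniformly locally doubling Borel measure that is
positive and finite on balls and satisfies a ball-overlap condition. -/
theorem exists_countable_lipschitz_decomposition_metric {X Y : Type*}
    [MetricSpace X] [CompleteSpace X] [TopologicalSpace.SeparableSpace X]
    [MeasurableSpace X] [BorelSpace X]
    [MetricSpace Y] [CompleteSpace Y] [TopologicalSpace.SeparableSpace Y]
    [MeasurableSpace Y] [BorelSpace Y]
    (μ : Measure X)
    (hpos : ∀ (x : X) (r : ℝ), 0 < r → 0 < μ (ball x r))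
    (hfin : ∀ (x : X) (r : ℝ), 0 < r → μ (ball x r) < ⊤)
    (C : ℝ≥0∞) (hC : C < ⊤) (R : ℝ) (hR : 0 < R)
    (hdoub : ∀ (x : X) (r : ℝ), 0 < r → r ≤ R → μ (ball x (2 * r)) ≤ C * μ (ball x r))
    (γ : ℝ≥0∞) (hγ : 0 < γ) (r₀ : ℝ) (hr₀ : 0 < r₀)
    (hover : ∀ u v : X, 0 < dist u v → dist u v < r₀ →
      γ * μ (ball u (dist u v)) ≤ μ (ball u (dist u v) ∩ ball v (dist u v)))
    (E : Set X) (hE : MeasurableSet E) (hEfin : μ E < ⊤)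
    (f : X → Y) (hf : Measurable (fun x : E => f x))
    (hap : ∀ g ∈ E, ∃ s : ℝ,
      HasDensityAt μ {x ∈ E | s < dist (f x) (f g) / dist x g} g 0) :
    ∃ A : ℕ → Set X,
      Pairwise (Disjoint on A) ∧ (∀ i, MeasurableSet (A i)) ∧
      E = ⋃ i, A i ∧ μ (A 0) = 0 ∧
      ∀ i : ℕ, 1 ≤ i → ∃ C' : ℝ≥0, LipschitzOnWith C' f (A i) := by
  classical
  -- trivial case: E empty
  rcases E.eq_empty_or_nonempty with hEe | ⟨e₀, he₀⟩
  · refine ⟨fun _ => ∅, ?_, fun _ => MeasurableSet.empty, ?_, measure_empty, ?_⟩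
    · intro i j _; simp [Function.onFun]
    · simp [hEe]
    · intro i _; exact ⟨1, by simp⟩
  haveI : Nonempty X := ⟨e₀⟩
  haveI : SecondCountableTopology X := UniformSpace.secondCountable_of_separable X
  haveI : IsLocallyFiniteMeasure μ :=
    ⟨fun x => ⟨ball x 1, ball_mem_nhds x one_pos, hfin x 1 one_pos⟩⟩
  haveI : IsUnifLocDoublingMeasure μ := by
    refine ⟨⟨C.toNNReal ^ 2, ?_⟩⟩
    have hmem : Ioc (0:ℝ) (2 * R / 3) ∈ 𝓝[>] (0:ℝ) :=
      Ioc_mem_nhdsGT_of_mem ⟨le_refl 0, by linarith⟩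
    filter_upwards [hmem] with ε hε x
    obtain ⟨hε0, hεR⟩ := hε
    have key1 : μ (ball x (2 * (3 * ε / 2))) ≤ C * μ (ball x (3 * ε / 2)) :=
      hdoub x (3 * ε / 2) (by linarith) (by linarith)
    have key2 : μ (ball x (2 * (3 * ε / 4))) ≤ C * μ (ball x (3 * ε / 4)) :=
      hdoub x (3 * ε / 4) (by linarith) (by linarith)
    calc μ (closedBall x (2 * ε)) ≤ μ (ball x (2 * (3 * ε / 2))) := by
          apply measure_mono; intro y hy
          simp only [mem_closedBall, mem_ball] at *; linarith
      _ ≤ C * μ (ball x (3 * ε / 2)) := key1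
      _ = C * μ (ball x (2 * (3 * ε / 4))) := by ring_nf
      _ ≤ C * (C * μ (ball x (3 * ε / 4))) := mul_le_mul_right key2 C
      _ ≤ C * (C * μ (closedBall x ε)) := by
          gcongr
          intro y hy
          simp only [mem_closedBall, mem_ball] at *; linarith
      _ ≤ ((C.toNNReal ^ 2 : ℝ≥0) : ℝ≥0∞) * μ (closedBall x ε) := by
          rw [← mul_assoc]; gcongr
          push_cast
          rw [ENNReal.coe_toNNReal hC.ne, sq]
  -- the measurable extension of `f`
  obtain ⟨f', hf'm, hf'c⟩ :=
    (MeasurableEmbedding.subtype_coe hE).exists_measurable_extend hf fun _ => ⟨f e₀⟩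
  have hf'E : ∀ x ∈ E, f' x = f x := fun x hx => congrFun hf'c ⟨x, hx⟩
  -- constants
  set K : ℝ≥0∞ := max C 1 with hKdef
  have hK1 : 1 ≤ K := le_max_right _ _
  have hKt : K ≠ ⊤ := (max_lt hC ENNReal.one_lt_top).ne
  have hK0 : K ≠ 0 := fun h => by simp [h] at hK1
  set γ' : ℝ≥0∞ := min γ 1 with hγ'def
  have hγ'0 : γ' ≠ 0 := (lt_min hγ zero_lt_one).ne'
  have hγ'1 : γ' ≤ 1 := min_le_right _ _
  have hγ't : γ' ≠ ⊤ := (hγ'1.trans_lt ENNReal.one_lt_top).ne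
  set c : ℝ≥0∞ := γ' / 4 / K with hcdef
  have hc0 : c ≠ 0 := by
    apply (ENNReal.div_pos (ENNReal.div_pos hγ'0 (by norm_num)).ne' hKt).ne'
  have hcK : c * K = γ' / 4 := ENNReal.div_mul_cancel hK0 hKt
  have hcc : c + c + c * K < γ' := by
    have h1 : c ≤ c * K := le_mul_of_one_le_right zero_le hK1
    have h2 : c + c + c * K ≤ 3 * (γ' / 4) := by
      calc c + c + c * K ≤ c * K + c * K + c * K := by gcongr
        _ = 3 * (c * K) := by ring
        _ = 3 * (γ' / 4) := by rw [hcK]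
    refine h2.trans_lt ?_
    have h3 : 3 * (γ' / 4) = 3 * γ' / 4 := (mul_div_assoc 3 γ' 4).symm
    rw [h3, ENNReal.div_lt_iff (Or.inl (by norm_num)) (Or.inl (by norm_num))]
    calc 3 * γ' < 4 * γ' := by
          exact ENNReal.mul_lt_mul_left hγ'0 hγ't (by norm_num)
      _ = γ' * 4 := mul_comm _ _
  -- the scale function
  set δ : ℕ → ℝ := fun m => min (1 / (m + 1)) (min r₀ R) with hδdef
  have hδpos : ∀ m, 0 < δ m := fun m =>
    lt_min (by positivity) (lt_min hr₀ hR)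
  have hδr₀ : ∀ m, δ m ≤ r₀ := fun m => (min_le_right _ _).trans (min_le_left _ _)
  have hδR : ∀ m, δ m ≤ R := fun m => (min_le_right _ _).trans (min_le_right _ _)
  -- the "bad" sets
  set Bad : ℕ → X → Set X := fun n g =>
    {x | x ∈ E ∧ (n : ℝ) * dist x g < dist (f' x) (f' g)} with hBaddef
  -- the good pieces
  set G : ℕ → ℕ → Set X := fun n m =>
    E ∩ ⋂ q ∈ {q : ℚ | 0 < (q : ℝ) ∧ (q : ℝ) < δ m},
      ({g : X | μ (Bad n g ∩ ball g (q : ℝ)) ≤ c * μ (ball g (q : ℝ))} ∩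
       {g : X | μ (Eᶜ ∩ ball g (q : ℝ)) ≤ c * μ (ball g (q : ℝ))}) with hGdef
  have hGE : ∀ n m, G n m ⊆ E := fun n m => inter_subset_left
  have hGmem : ∀ n m g, g ∈ G n m ↔ g ∈ E ∧ ∀ q : ℚ, 0 < (q : ℝ) → (q : ℝ) < δ m →
      μ (Bad n g ∩ ball g (q : ℝ)) ≤ c * μ (ball g (q : ℝ)) ∧
      μ (Eᶜ ∩ ball g (q : ℝ)) ≤ c * μ (ball g (q : ℝ)) := by
    intro n m g
    simp only [hGdef, mem_inter_iff, mem_iInter, mem_setOf_eq]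
    constructor
    · rintro ⟨h1, h2⟩
      exact ⟨h1, fun q hq0 hqδ => h2 q ⟨hq0, hqδ⟩⟩
    · rintro ⟨h1, h2⟩
      exact ⟨h1, fun q hq => h2 q hq.1 hq.2⟩
  -- measurability of the pieces
  have hballmeas : ∀ r : ℝ, Measurable fun g : X => μ (ball g r) := by
    intro r
    have hs : MeasurableSet {p : X × X | dist p.2 p.1 < r} :=
      measurableSet_lt (measurable_dist.comp (measurable_snd.prodMk measurable_fst))
        measurable_const
    exact measurable_measure_prodMk_left hs
  have hGmeas : ∀ n m, MeasurableSet (G n m) := by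
    intro n m
    apply hE.inter
    refine MeasurableSet.biInter (to_countable _) fun q _ => MeasurableSet.inter ?_ ?_
    · have hs : MeasurableSet {p : X × X |
          (p.2 ∈ E ∧ (n : ℝ) * dist p.2 p.1 < dist (f' p.2) (f' p.1)) ∧ dist p.2 p.1 < (q : ℝ)} := by
        refine MeasurableSet.inter (MeasurableSet.inter (measurable_snd hE) ?_) ?_
        · exact measurableSet_lt
            ((measurable_dist.comp (measurable_snd.prodMk measurable_fst)).const_mul _)
            ((hf'm.comp measurable_snd).dist (hf'm.comp measurable_fst))
        · exact measurableSet_lt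
            (measurable_dist.comp (measurable_snd.prodMk measurable_fst)) measurable_const
      have hm : Measurable fun g : X => μ (Bad n g ∩ ball g (q : ℝ)) :=
        measurable_measure_prodMk_left hs
      exact measurableSet_le hm ((hballmeas (q : ℝ)).const_mul c)
    · have hs : MeasurableSet {p : X × X | p.2 ∈ Eᶜ ∧ dist p.2 p.1 < (q : ℝ)} := by
        refine MeasurableSet.inter (measurable_snd hE.compl) ?_
        exact measurableSet_lt
          (measurable_dist.comp (measurable_snd.prodMk measurable_fst)) measurable_const
      have hm : Measurable fun g : X => μ (Eᶜ ∩ ball g (q : ℝ)) :=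
        measurable_measure_prodMk_left hs
      exact measurableSet_le hm ((hballmeas (q : ℝ)).const_mul c)
  -- the key Lipschitz estimate on the pieces
  have key : ∀ n m, ∀ g ∈ G n m, ∀ g' ∈ G n m, dist g g' < δ m →
      dist (f g) (f g') ≤ 2 * n * dist g g' := by
    intro n m g hg g' hg' hlt
    rcases eq_or_ne g g' with rfl | hne
    · simp [mul_nonneg, dist_nonneg]
    have hgE : g ∈ E := (hGmem n m g).1 hg |>.1
    have hg'E : g' ∈ E := (hGmem n m g').1 hg' |>.1
    have hr : 0 < dist g g' := dist_pos.2 hne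
    set r := dist g g' with hrdef
    have h1 : μ (Bad n g ∩ ball g r) ≤ c * μ (ball g r) :=
      rat_radius_bound μ _ g (δ m) c
        (fun q hq0 hqδ => (((hGmem n m g).1 hg).2 q hq0 hqδ).1) r hlt
    have h2 : μ (Eᶜ ∩ ball g r) ≤ c * μ (ball g r) :=
      rat_radius_bound μ _ g (δ m) c
        (fun q hq0 hqδ => (((hGmem n m g).1 hg).2 q hq0 hqδ).2) r hlt
    have h3 : μ (Bad n g' ∩ ball g' r) ≤ c * μ (ball g' r) :=
      rat_radius_bound μ _ g' (δ m) c
        (fun q hq0 hqδ => (((hGmem n m g').1 hg').2 q hq0 hqδ).1) r hlt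
    have hov : γ' * μ (ball g r) ≤ μ (ball g r ∩ ball g' r) :=
      le_trans (mul_le_mul_left (min_le_left _ _) _)
        (hover g g' hr (hlt.trans_le (hδr₀ m)))
    have hsub2 : ball g' r ⊆ ball g (2 * r) := by
      intro y hy
      simp only [mem_ball] at *
      have := dist_triangle y g' g
      rw [dist_comm g' g] at this
      linarith
    have hB2 : μ (ball g' r) ≤ K * μ (ball g r) :=
      (measure_mono hsub2).trans ((hdoub g r hr ((hlt.trans_le (hδR m)).le)).trans
        (mul_le_mul_left (le_max_left _ _) _))
    have hb0 : μ (ball g r) ≠ 0 := (hpos g r hr).ne'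
    have hbt : μ (ball g r) ≠ ⊤ := (hfin g r hr).ne
    -- find a common good point
    have hcover : ¬ (ball g r ∩ ball g' r ⊆
        (Eᶜ ∩ ball g r) ∪ (Bad n g ∩ ball g r) ∪ (Bad n g' ∩ ball g' r)) := by
      intro hsubc
      have hest : μ (ball g r ∩ ball g' r) ≤ (c + c + c * K) * μ (ball g r) := by
        calc μ (ball g r ∩ ball g' r)
            ≤ μ ((Eᶜ ∩ ball g r) ∪ (Bad n g ∩ ball g r) ∪ (Bad n g' ∩ ball g' r)) :=
              measure_mono hsubc
          _ ≤ μ (Eᶜ ∩ ball g r) + μ (Bad n g ∩ ball g r) + μ (Bad n g' ∩ ball g' r) :=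
              le_trans (measure_union_le _ _) (add_le_add_left (measure_union_le _ _) _)
          _ ≤ c * μ (ball g r) + c * μ (ball g r) + c * (K * μ (ball g r)) := by
              gcongr
              exact h3.trans (mul_le_mul_right hB2 c)
          _ = (c + c + c * K) * μ (ball g r) := by ring
      have hlt2 : (c + c + c * K) * μ (ball g r) < γ' * μ (ball g r) :=
        ENNReal.mul_lt_mul_left hb0 hbt hcc
      exact absurd hov (not_le.2 (hest.trans_lt hlt2))
    obtain ⟨x, hxI, hxU⟩ := not_subset.1 hcover
    have hxb1 : x ∈ ball g r := hxI.1
    have hxb2 : x ∈ ball g' r := hxI.2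
    have hx1 : x ∉ Eᶜ ∩ ball g r := fun h => hxU (mem_union_left _ (mem_union_left _ h))
    have hx2 : x ∉ Bad n g ∩ ball g r := fun h => hxU (mem_union_left _ (mem_union_right _ h))
    have hx3 : x ∉ Bad n g' ∩ ball g' r := fun h => hxU (mem_union_right _ h)
    have hxE : x ∈ E := by
      by_contra hxE
      exact (hx1 ⟨hxE, hxb1⟩).elim
    have hxg : dist (f' x) (f' g) ≤ (n : ℝ) * dist x g := by
      by_contra h
      exact hx2 ⟨⟨hxE, not_le.1 h⟩, hxb1⟩
    have hxg' : dist (f' x) (f' g') ≤ (n : ℝ) * dist x g' := by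
      by_contra h
      exact hx3 ⟨⟨hxE, not_le.1 h⟩, hxb2⟩
    rw [hf'E x hxE, hf'E g hgE] at hxg
    rw [hf'E x hxE, hf'E g' hg'E] at hxg'
    have hd1 : dist x g < r := mem_ball.1 hxb1
    have hd2 : dist x g' < r := mem_ball.1 hxb2
    have hn0 : (0 : ℝ) ≤ (n : ℝ) := Nat.cast_nonneg n
    calc dist (f g) (f g') ≤ dist (f g) (f x) + dist (f x) (f g') := dist_triangle _ _ _
      _ ≤ (n : ℝ) * dist x g + (n : ℝ) * dist x g' := by
          rw [dist_comm (f g) (f x)]; exact add_le_add hxg hxg'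
      _ ≤ (n : ℝ) * r + (n : ℝ) * r := by
          apply add_le_add <;> exact mul_le_mul_of_nonneg_left (by linarith) hn0
      _ = 2 * n * r := by ring
  -- almost every point of E belongs to some piece
  have hdens := IsUnifLocDoublingMeasure.ae_tendsto_measure_inter_div (μ := μ) E 1
  have hcovae : ∀ᵐ g ∂μ.restrict E, g ∈ ⋃ p : ℕ × ℕ, G p.1 p.2 := by
    filter_upwards [hdens, ae_restrict_mem hE] with g hg hgE
    have hgdens : Tendsto (fun r : ℝ => μ (E ∩ closedBall g r) / μ (closedBall g r))
        (𝓝[>] (0:ℝ)) (𝓝 1) := by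
      apply hg (fun _ => g) id tendsto_id
      filter_upwards [self_mem_nhdsWithin] with t ht
      exact mem_closedBall_self (by simpa using le_of_lt ht)
    obtain ⟨s, hs⟩ := hap g hgE
    obtain ⟨n, hn⟩ := exists_nat_ge s
    -- the bad set is contained in the approximate-limit set
    have hBadsub : Bad n g ⊆ {x ∈ E | s < dist (f x) (f g) / dist x g} := by
      rintro x ⟨hxE, hxlt⟩
      rw [hf'E x hxE, hf'E g hgE] at hxlt
      refine ⟨hxE, ?_⟩
      rcases eq_or_ne x g with rfl | hxg
      · simp at hxlt
      · have hd : 0 < dist x g := dist_pos.2 hxg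
        have : (n : ℝ) < dist (f x) (f g) / dist x g := by
          rw [lt_div_iff₀ hd]; linarith
        linarith
    -- eventual smallness of the bad set
    have hev1 : ∀ᶠ t in 𝓝[>] (0:ℝ),
        μ ({x ∈ E | s < dist (f x) (f g) / dist x g} ∩ ball g t) / μ (ball g t) < c :=
      hs (Iio_mem_nhds (pos_iff_ne_zero.2 hc0))
    -- eventual density of E
    set ε' : ℝ≥0∞ := c / K with hε'def
    have hε'0 : ε' ≠ 0 := (ENNReal.div_pos hc0 hKt).ne'
    have hε'1 : ε' ≤ 1 := by
      calc ε' ≤ c := ENNReal.div_le_of_le_mul (le_mul_of_one_le_right zero_le hK1)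
        _ ≤ γ' / 4 := by rw [← hcK]; exact le_mul_of_one_le_right zero_le hK1
        _ ≤ 1 / 4 := by gcongr
        _ ≤ 1 := by norm_num
    have hε'K : ε' * K ≤ c := le_of_eq (ENNReal.div_mul_cancel hK0 hKt)
    have hev2 : ∀ᶠ t in 𝓝[>] (0:ℝ),
        1 - ε' < μ (E ∩ closedBall g t) / μ (closedBall g t) :=
      hgdens (Ioi_mem_nhds (ENNReal.sub_lt_self ENNReal.one_ne_top one_ne_zero hε'0))
    obtain ⟨u, hu, husub⟩ := mem_nhdsGT_iff_exists_Ioo_subset.1 ((hev1.and hev2) :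
      {t : ℝ | _} ∈ 𝓝[>] (0:ℝ))
    obtain ⟨m, hm⟩ := exists_nat_one_div_lt (mem_Ioi.1 hu)
    refine mem_iUnion.2 ⟨(n, m), (hGmem n m g).2 ⟨hgE, fun q hq0 hqδ => ?_⟩⟩
    have hqu : (q : ℝ) ∈ Ioo (0:ℝ) u := by
      constructor
      · exact hq0
      · calc (q : ℝ) < δ m := hqδ
          _ ≤ 1 / (m + 1) := min_le_left _ _
          _ < u := by exact_mod_cast hm
    obtain ⟨hq1, hq2⟩ := husub hqu
    have hqb0 : μ (ball g (q:ℝ)) ≠ 0 := (hpos g _ hq0).ne'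
    have hqbt : μ (ball g (q:ℝ)) ≠ ⊤ := (hfin g _ hq0).ne
    constructor
    · -- bad set estimate
      have := (measure_mono (inter_subset_inter_left _ hBadsub)).trans
        ((ENNReal.div_le_iff hqb0 hqbt).1 hq1.le)
      exact this
    · -- complement estimate
      have hcb0 : μ (closedBall g (q:ℝ)) ≠ 0 := by
        refine fun h => hqb0 (measure_mono_null ball_subset_closedBall h)
      have hcbt : μ (closedBall g (q:ℝ)) ≠ ⊤ := by
        refine ne_top_of_le_ne_top (hfin g (2 * q) (by linarith)).ne
          (measure_mono ?_)
        intro y hy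
        simp only [mem_closedBall, mem_ball] at *
        linarith
      have hEcb : (1 - ε') * μ (closedBall g (q:ℝ)) ≤ μ (E ∩ closedBall g (q:ℝ)) := by
        rw [← ENNReal.le_div_iff_mul_le (Or.inl hcb0) (Or.inl hcbt)]
        exact hq2.le
      have hdiff : μ (closedBall g (q:ℝ) \ E) ≤ ε' * μ (closedBall g (q:ℝ)) := by
        have h5 : μ (closedBall g (q:ℝ) \ E) + μ (closedBall g (q:ℝ) ∩ E) =
            μ (closedBall g (q:ℝ)) := measure_diff_add_inter _ hE
        have h7 : (1 - ε') * μ (closedBall g (q:ℝ)) ≤ μ (closedBall g (q:ℝ) ∩ E) := by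
          rw [inter_comm]; exact hEcb
        have h8 : μ (closedBall g (q:ℝ) \ E) + (1 - ε') * μ (closedBall g (q:ℝ)) ≤
            μ (closedBall g (q:ℝ)) :=
          calc μ (closedBall g (q:ℝ) \ E) + (1 - ε') * μ (closedBall g (q:ℝ))
              ≤ μ (closedBall g (q:ℝ) \ E) + μ (closedBall g (q:ℝ) ∩ E) :=
                add_le_add_right h7 _
            _ = μ (closedBall g (q:ℝ)) := h5
        have h10 : μ (closedBall g (q:ℝ)) =
            ε' * μ (closedBall g (q:ℝ)) + (1 - ε') * μ (closedBall g (q:ℝ)) := by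
          rw [← add_mul, add_tsub_cancel_of_le hε'1, one_mul]
        have h11 := h8.trans h10.le
        have hne : (1 - ε') * μ (closedBall g (q:ℝ)) ≠ ⊤ :=
          ENNReal.mul_ne_top (ne_top_of_le_ne_top ENNReal.one_ne_top tsub_le_self) hcbt
        exact (ENNReal.add_le_add_iff_right hne).1 h11
      calc μ (Eᶜ ∩ ball g (q:ℝ)) ≤ μ (closedBall g (q:ℝ) \ E) := by
            apply measure_mono
            rintro y ⟨hy1, hy2⟩
            exact ⟨ball_subset_closedBall hy2, hy1⟩
        _ ≤ ε' * μ (closedBall g (q:ℝ)) := hdiff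
        _ ≤ ε' * μ (ball g (2 * q)) := by
            gcongr
            intro y hy
            simp only [mem_closedBall, mem_ball] at *
            linarith
        _ ≤ ε' * (C * μ (ball g (q:ℝ))) := by
            gcongr
            exact hdoub g q hq0 (by
              have := hδR m
              linarith [hqδ])
        _ ≤ ε' * (K * μ (ball g (q:ℝ))) := by gcongr; exact le_max_left _ _
        _ = (ε' * K) * μ (ball g (q:ℝ)) := by ring
        _ ≤ c * μ (ball g (q:ℝ)) := mul_le_mul_left hε'K _
  -- the null set
  have hnull : μ (E \ ⋃ p : ℕ × ℕ, G p.1 p.2) = 0 := by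
    have hmeas : MeasurableSet (⋃ p : ℕ × ℕ, G p.1 p.2) :=
      MeasurableSet.iUnion fun p => hGmeas p.1 p.2
    have h0 : (μ.restrict E) {a | a ∉ ⋃ p : ℕ × ℕ, G p.1 p.2} = 0 := ae_iff.1 hcovae
    rw [show {a | a ∉ ⋃ p : ℕ × ℕ, G p.1 p.2} = (⋃ p : ℕ × ℕ, G p.1 p.2)ᶜ from rfl,
      Measure.restrict_apply hmeas.compl] at h0
    simpa [diff_eq, inter_comm] using h0
  -- dense sequence for cutting the pieces small
  obtain ⟨z, hz⟩ := TopologicalSpace.exists_dense_seq X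
  -- enumerate triples
  set en : ℕ ≃ ℕ × ℕ × ℕ := (Denumerable.eqv (ℕ × ℕ × ℕ)).symm with hendef
  set P : ℕ × ℕ × ℕ → Set X := fun p =>
    G p.1 p.2.1 ∩ ball (z p.2.2) (δ p.2.1 / 2) with hPdef
  set Q : ℕ → Set X := fun k => P (en k) with hQdef
  have hQmeas : ∀ k, MeasurableSet (Q k) :=
    fun k => (hGmeas _ _).inter measurableSet_ball
  have hQE : ∀ k, Q k ⊆ E := fun k => inter_subset_left.trans (hGE _ _)
  -- every point in some G n m lies in some Q k
  have hGQ : ∀ p : ℕ × ℕ, G p.1 p.2 ⊆ ⋃ k, Q k := by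
    rintro ⟨n, m⟩ g hg
    obtain ⟨j, hj⟩ := hz.exists_dist_lt g (half_pos (hδpos m))
    refine mem_iUnion.2 ⟨Denumerable.eqv (ℕ × ℕ × ℕ) (n, m, j), ?_⟩
    simp only [hQdef, hPdef, hendef, Equiv.symm_apply_apply]
    exact ⟨hg, by rwa [mem_ball]⟩
  -- the decomposition
  refine ⟨fun i => Nat.casesOn i (E \ ⋃ k, Q k) (fun k => disjointed Q k), ?_, ?_, ?_, ?_, ?_⟩
  · -- pairwise disjoint
    intro i j hij
    match i, j with
    | 0, 0 => exact absurd rfl hij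
    | 0, (k+1) =>
      simp only [Function.onFun]
      exact Disjoint.mono_right ((disjointed_subset Q k).trans (subset_iUnion Q k))
        disjoint_sdiff_left
    | (k+1), 0 =>
      simp only [Function.onFun]
      exact Disjoint.mono_left ((disjointed_subset Q k).trans (subset_iUnion Q k))
        disjoint_sdiff_right
    | (k+1), (l+1) =>
      simp only [Function.onFun]
      exact disjoint_disjointed Q (fun h => hij (by rw [h]))
  · -- measurability
    intro i
    match i with
    | 0 => exact hE.diff (MeasurableSet.iUnion hQmeas)
    | (k+1) => exact MeasurableSet.disjointed hQmeas k
  · -- the union is E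
    ext x
    simp only [mem_iUnion]
    constructor
    · intro hx
      by_cases hxQ : x ∈ ⋃ k, Q k
      · obtain ⟨k, hk⟩ := mem_iUnion.1 ((iUnion_disjointed (f := Q)).symm ▸ hxQ)
        exact ⟨k + 1, hk⟩
      · exact ⟨0, hx, hxQ⟩
    · rintro ⟨i, hi⟩
      match i, hi with
      | 0, hi => exact hi.1
      | (k+1), hi => exact hQE k (disjointed_subset Q k hi)
  · -- the null piece
    apply measure_mono_null _ hnull
    intro x hx
    refine ⟨hx.1, fun hxG => hx.2 ?_⟩
    obtain ⟨p, hp⟩ := mem_iUnion.1 hxG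
    exact hGQ p hp
  · -- Lipschitz pieces
    intro i hi
    obtain ⟨k, rfl⟩ : ∃ k, i = k + 1 := ⟨i - 1, (Nat.succ_pred_eq_of_pos hi).symm⟩
    refine ⟨2 * (en k).1, ?_⟩
    rw [lipschitzOnWith_iff_dist_le_mul]
    intro x hx y hy
    have hxP : x ∈ P (en k) := disjointed_subset Q k hx
    have hyP : y ∈ P (en k) := disjointed_subset Q k hy
    have hdist : dist x y < δ (en k).2.1 := by
      have h1 : dist x (z (en k).2.2) < δ (en k).2.1 / 2 := mem_ball.1 hxP.2
      have h2 : dist y (z (en k).2.2) < δ (en k).2.1 / 2 := mem_ball.1 hyP.2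
      calc dist x y ≤ dist x (z (en k).2.2) + dist (z (en k).2.2) y := dist_triangle _ _ _
        _ < δ (en k).2.1 / 2 + δ (en k).2.1 / 2 := by
            rw [dist_comm (z (en k).2.2) y]; exact add_lt_add h1 h2
        _ = δ (en k).2.1 := by ring
    have := key (en k).1 (en k).2.1 x hxP.1 y hyP.1 hdist
    calc dist (f x) (f y) ≤ 2 * (en k).1 * dist x y := this
      _ = ((2 * (en k).1 : ℝ≥0) : ℝ) * dist x y := by push_cast; ring
end

section
/- Let E ⊆ ℝ^n be a Lebesgue-measurable set and f : E → ℝ^m a mapping. Suppose there is a sequence of pairwise disjoint measurable sets Q₁, Q₂, … with λ(E \ ⋃_{i≥1} Q_i) = 0 such that every restriction f|_{Q_i} is a Lipschitz mapping. Then for each j = 1, …, n, f has an approximate partial derivative along the coordinate direction e_j at almost every point of E. -/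
open MeasureTheory Metric Filter Set Function
open scoped Topology ENNReal NNReal

/-- `v` is an approximate partial derivative of `f` (as a map defined on `E`) along the
coordinate direction `e j` at `x`. -/
def HasApproxPartialDerivAt {n m : ℕ} (E : Set (EuclideanSpace ℝ (Fin n)))
    (f : EuclideanSpace ℝ (Fin n) → EuclideanSpace ℝ (Fin m)) (j : Fin n)
    (x : EuclideanSpace ℝ (Fin n)) (v : EuclideanSpace ℝ (Fin m)) : Prop :=
  ∀ ε : ℝ, 0 < ε →
    HasDensityAt (volume : Measure ℝ)
      {t : ℝ | x + t • EuclideanSpace.single j (1 : ℝ) ∈ E ∧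
        ε * |t| < ‖f (x + t • EuclideanSpace.single j (1 : ℝ)) - f x - t • v‖} 0 0

namespace ApproxAux

/-- A countable quantitative version of "the complement of `A` has linear density `0` at `x`
along direction `j`". -/
def QP {n : ℕ} (A : Set (EuclideanSpace ℝ (Fin n))) (j : Fin n)
    (x : EuclideanSpace ℝ (Fin n)) : Prop :=
  ∀ k : ℕ, ∃ δ : ℚ, 0 < δ ∧ ∀ q : ℚ, 0 < q → q ≤ δ →
    volume ({t : ℝ | x + t • EuclideanSpace.single j (1:ℝ) ∉ A} ∩ ball (0:ℝ) (q:ℝ))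
      ≤ ((k : ℝ≥0∞) + 1)⁻¹ * ENNReal.ofReal (2 * (q:ℝ))

theorem tendsto_of_QP {n : ℕ} {A : Set (EuclideanSpace ℝ (Fin n))} {j : Fin n}
    {x : EuclideanSpace ℝ (Fin n)} (h : QP A j x) :
    Tendsto (fun r : ℝ =>
        volume ({t : ℝ | x + t • EuclideanSpace.single j (1:ℝ) ∉ A} ∩ ball (0:ℝ) r)
          / volume (ball (0:ℝ) r)) (𝓝[>] (0:ℝ)) (𝓝 0) := by
  set T := {t : ℝ | x + t • EuclideanSpace.single j (1:ℝ) ∉ A} with hT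
  rw [ENNReal.tendsto_nhds_zero]
  intro ε hε
  obtain ⟨k, hk⟩ : ∃ k : ℕ, 2 * ((k : ℝ≥0∞) + 1)⁻¹ ≤ ε := by
    have h1 : Tendsto (fun k : ℕ => 2 * ((k : ℝ≥0∞) + 1)⁻¹) atTop (𝓝 0) := by
      have h2 : Tendsto (fun k : ℕ => ((k : ℝ≥0∞) + 1)⁻¹) atTop (𝓝 0) :=
        (ENNReal.tendsto_inv_nat_nhds_zero.comp (tendsto_add_atTop_nat 1)).congr
          (fun k => by simp [Function.comp])
      simpa using ENNReal.Tendsto.const_mul h2 (Or.inr (by norm_num))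
    exact (h1.eventually_lt_const hε).exists.imp fun k h => h.le
  obtain ⟨δ, hδ, hq⟩ := h k
  have hδR : (0:ℝ) < (δ:ℝ) := by exact_mod_cast hδ
  filter_upwards [Ioo_mem_nhdsGT_of_mem (show (0:ℝ) ∈ Ico (0:ℝ) (δ:ℝ) from ⟨le_refl 0, hδR⟩)] with r hr
  obtain ⟨q, hq1, hq2⟩ := exists_rat_btwn (show r < min (δ:ℝ) (2*r) by
    refine lt_min hr.2 (by linarith [hr.1]))
  have hq0 : (0:ℚ) < q := by exact_mod_cast hr.1.trans hq1
  have hqδ : q ≤ δ := by exact_mod_cast (hq2.trans_le (min_le_left _ _)).le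
  have hG := hq q hq0 hqδ
  have hmono : volume (T ∩ ball (0:ℝ) r) ≤ volume (T ∩ ball (0:ℝ) (q:ℝ)) :=
    measure_mono (inter_subset_inter_right _ (ball_subset_ball hq1.le))
  have hb : volume (ball (0:ℝ) r) = ENNReal.ofReal (2*r) := Real.volume_ball 0 r
  have hnum : volume (T ∩ ball (0:ℝ) r) ≤ (2 * ((k:ℝ≥0∞)+1)⁻¹) * ENNReal.ofReal (2*r) := by
    refine hmono.trans (hG.trans ?_)
    have h2q : ENNReal.ofReal (2*(q:ℝ)) ≤ 2 * ENNReal.ofReal (2*r) := by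
      have hqr : (q:ℝ) ≤ 2*r := (hq2.trans_le (min_le_right _ _)).le
      have hq4 : (2*(q:ℝ)) ≤ 2*(2*r) := by linarith
      calc ENNReal.ofReal (2*(q:ℝ)) ≤ ENNReal.ofReal (2*(2*r)) := ENNReal.ofReal_le_ofReal hq4
        _ = 2 * ENNReal.ofReal (2*r) := by
            rw [ENNReal.ofReal_mul (by norm_num : (0:ℝ) ≤ 2), ENNReal.ofReal_ofNat]
    calc ((k:ℝ≥0∞)+1)⁻¹ * ENNReal.ofReal (2*(q:ℝ))
        ≤ ((k:ℝ≥0∞)+1)⁻¹ * (2 * ENNReal.ofReal (2*r)) := by gcongr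
      _ = (2 * ((k:ℝ≥0∞)+1)⁻¹) * ENNReal.ofReal (2*r) := by ring
  refine le_trans ?_ hk
  rw [hb]
  exact ENNReal.div_le_of_le_mul (by rw [mul_comm] at hnum ⊢; exact hnum)

theorem QP_of_density {S : Set ℝ} (hS : MeasurableSet S) {s : ℝ}
    (hd : Tendsto (fun r => volume (S ∩ closedBall s r) / volume (closedBall s r))
      (𝓝[>] (0:ℝ)) (𝓝 1)) (k : ℕ) :
    ∃ δ : ℚ, 0 < δ ∧ ∀ q : ℚ, 0 < q → q ≤ δ →
      volume (Sᶜ ∩ ball s (q:ℝ)) ≤ ((k : ℝ≥0∞) + 1)⁻¹ * ENNReal.ofReal (2 * (q:ℝ)) := by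
  set i : ℝ≥0∞ := ((k : ℝ≥0∞) + 1)⁻¹ with hi
  have hi0 : i ≠ 0 := ENNReal.inv_ne_zero.2 (by simp)
  have hi1 : i ≤ 1 := ENNReal.inv_le_one.2 (by simp [le_add_self])
  set c : ℝ≥0∞ := 1 - i with hc
  have hclt : c < 1 := ENNReal.sub_lt_self ENNReal.one_ne_top one_ne_zero hi0
  have hev := hd.eventually_const_lt hclt
  rw [eventually_nhdsWithin_iff, Metric.eventually_nhds_iff] at hev
  obtain ⟨δR, hδR, hball⟩ := hev
  obtain ⟨δ, hδ1, hδ2⟩ := exists_rat_btwn hδR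
  have hδ0 : 0 < δ := by exact_mod_cast hδ1
  refine ⟨δ, hδ0, fun q hq0 hqδ => ?_⟩
  have hq0R : (0:ℝ) < (q:ℝ) := by exact_mod_cast hq0
  have hrat : c < volume (S ∩ closedBall s (q:ℝ)) / volume (closedBall s (q:ℝ)) := by
    refine hball ?_ hq0R
    rw [Real.dist_eq, sub_zero, abs_of_pos hq0R]
    calc (q:ℝ) ≤ (δ:ℝ) := by exact_mod_cast hqδ
      _ < δR := hδ2
  set b := volume (closedBall s (q:ℝ)) with hbdef
  have hbval : b = ENNReal.ofReal (2*(q:ℝ)) := Real.volume_closedBall s q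
  have hb0 : b ≠ 0 := by rw [hbval]; simp [ENNReal.ofReal_eq_zero]; linarith
  have hbt : b ≠ ∞ := by rw [hbval]; exact ENNReal.ofReal_ne_top
  have ha : c * b ≤ volume (S ∩ closedBall s (q:ℝ)) := by
    calc c * b ≤ (volume (S ∩ closedBall s (q:ℝ)) / b) * b :=
          mul_le_mul_left hrat.le b
      _ = volume (S ∩ closedBall s (q:ℝ)) := ENNReal.div_mul_cancel hb0 hbt
  have key : volume (Sᶜ ∩ ball s (q:ℝ)) ≤ b - c * b := by
    have h1 : volume (Sᶜ ∩ ball s (q:ℝ))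
        ≤ volume (closedBall s (q:ℝ) \ (S ∩ closedBall s (q:ℝ))) := by
      refine measure_mono fun t ht => ?_
      exact ⟨ball_subset_closedBall ht.2, fun hh => ht.1 hh.1⟩
    rw [measure_diff inter_subset_right
      ((hS.inter measurableSet_closedBall).nullMeasurableSet)
      (ne_top_of_le_ne_top hbt (measure_mono inter_subset_right))] at h1
    exact h1.trans (tsub_le_tsub_left ha b)
  have hbc : b - c * b ≤ i * b := by
    rw [tsub_le_iff_right]
    have : i * b + c * b = (i + c) * b := (add_mul i c b).symm
    rw [this, hc, add_comm i (1 - i), tsub_add_cancel_of_le hi1, one_mul]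
  calc volume (Sᶜ ∩ ball s (q:ℝ)) ≤ b - c * b := key
    _ ≤ i * b := hbc
    _ = i * ENNReal.ofReal (2*(q:ℝ)) := by rw [hbval]

theorem ae_line_density {n : ℕ} (A : Set (EuclideanSpace ℝ (Fin n))) (hA : MeasurableSet A)
    (j : Fin n) :
    ∀ᵐ x ∂(volume : Measure (EuclideanSpace ℝ (Fin n))), x ∈ A → QP A j x := by
  classical
  have hU : Unique {i : Fin n // ¬ i ≠ j} :=
    ⟨⟨⟨j, by simp⟩⟩, fun a => Subtype.ext (by simpa using a.2)⟩
  set u : EuclideanSpace ℝ (Fin n) := EuclideanSpace.single j (1:ℝ) with hu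
  -- measurability of the slice measures
  have hGmeas : ∀ q : ℚ, Measurable (fun x : EuclideanSpace ℝ (Fin n) =>
      volume ({t : ℝ | x + t • u ∉ A} ∩ ball (0:ℝ) (q:ℝ))) := by
    intro q
    have hmap : Measurable (fun p : EuclideanSpace ℝ (Fin n) × ℝ => p.1 + p.2 • u) :=
      (continuous_fst.add (continuous_snd.smul continuous_const)).measurable
    have hmA : MeasurableSet {p : EuclideanSpace ℝ (Fin n) × ℝ |
        p.1 + p.2 • u ∉ A ∧ p.2 ∈ ball (0:ℝ) (q:ℝ)} := by
      rw [Set.setOf_and]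
      exact (hmap hA.compl).inter (measurable_snd measurableSet_ball)
    have h1 := measurable_measure_prodMk_left (ν := (volume : Measure ℝ)) hmA
    have h2 : (fun x : EuclideanSpace ℝ (Fin n) =>
        volume ({t : ℝ | x + t • u ∉ A} ∩ ball (0:ℝ) (q:ℝ)))
        = fun x => volume (Prod.mk x ⁻¹' {p : EuclideanSpace ℝ (Fin n) × ℝ |
            p.1 + p.2 • u ∉ A ∧ p.2 ∈ ball (0:ℝ) (q:ℝ)}) := by
      funext x; rfl
    rw [h2]; exact h1
  have hQPmeas : MeasurableSet {x : EuclideanSpace ℝ (Fin n) | QP A j x} := by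
    have heq : {x : EuclideanSpace ℝ (Fin n) | QP A j x}
        = ⋂ k : ℕ, ⋃ δ : ℚ, ⋃ _ : 0 < δ, ⋂ q : ℚ, ⋂ _ : 0 < q, ⋂ _ : q ≤ δ,
          {x | volume ({t : ℝ | x + t • u ∉ A} ∩ ball (0:ℝ) (q:ℝ))
            ≤ ((k:ℝ≥0∞)+1)⁻¹ * ENNReal.ofReal (2*(q:ℝ))} := by
      ext x; simp [QP, hu]
    rw [heq]
    exact MeasurableSet.iInter fun k => MeasurableSet.iUnion fun δ =>
      MeasurableSet.iUnion fun _ => MeasurableSet.iInter fun q =>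
      MeasurableSet.iInter fun _ => MeasurableSet.iInter fun _ =>
      measurableSet_le (hGmeas q) measurable_const
  set Bad := A ∩ {x : EuclideanSpace ℝ (Fin n) | QP A j x}ᶜ with hBad
  have hBadMeas : MeasurableSet Bad := hA.inter hQPmeas.compl
  suffices hnull : volume Bad = 0 by
    rw [ae_iff]
    convert hnull using 2
    ext x; simp [hBad, Classical.not_imp]
  -- the splitting map
  set Ψ : ({i : Fin n // i ≠ j} → ℝ) × ℝ → EuclideanSpace ℝ (Fin n) :=
    fun p => (MeasurableEquiv.toLp 2 (Fin n → ℝ))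
      (fun i => if h : i ≠ j then p.1 ⟨i,h⟩ else p.2) with hΨdef
  have hΨeq : Ψ = ⇑(MeasurableEquiv.toLp 2 (Fin n → ℝ)) ∘
      ⇑(MeasurableEquiv.piEquivPiSubtypeProd (fun _ : Fin n => ℝ) (fun i => i ≠ j)).symm ∘
      (Prod.map id ⇑(@MeasurableEquiv.funUnique {i : Fin n // ¬ i ≠ j} ℝ hU _).symm) := by
    funext p; rfl
  have hΨ : MeasurePreserving Ψ
      ((volume : Measure ({i : Fin n // i ≠ j} → ℝ)).prod (volume : Measure ℝ)) volume := by
    rw [hΨeq]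
    have h1 : MeasurePreserving
        (Prod.map (id : ({i : Fin n // i ≠ j} → ℝ) → _)
          ⇑(@MeasurableEquiv.funUnique {i : Fin n // ¬ i ≠ j} ℝ hU _).symm)
        ((volume : Measure ({i : Fin n // i ≠ j} → ℝ)).prod (volume : Measure ℝ))
        ((volume : Measure ({i : Fin n // i ≠ j} → ℝ)).prod
          (volume : Measure ({i : Fin n // ¬ i ≠ j} → ℝ))) := by
      refine (MeasurePreserving.id _).prod ?_
      have hveq : (volume : Measure ({i : Fin n // ¬ i ≠ j} → ℝ)) =
          @volume _ (@MeasureSpace.pi {i : Fin n // ¬ i ≠ j} (@Unique.fintype _ hU)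
            (fun _ => ℝ) (fun _ => Real.measureSpace)) := by congr!
      rw [hveq]
      exact (@volume_preserving_funUnique _ ℝ hU _).symm _
    have h2 := (volume_preserving_piEquivPiSubtypeProd (fun _ : Fin n => ℝ)
      (fun i => i ≠ j)).symm (MeasurableEquiv.piEquivPiSubtypeProd (fun _ : Fin n => ℝ)
      (fun i => i ≠ j))
    rw [Measure.volume_eq_prod] at h2
    have h3 : MeasurePreserving ⇑(MeasurableEquiv.toLp 2 (Fin n → ℝ))
        (volume : Measure (Fin n → ℝ)) volume :=
      PiLp.volume_preserving_toLp (Fin n)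
    exact (h3.comp h2).comp h1
  have hkey : ∀ (y : {i : Fin n // i ≠ j} → ℝ) (s t : ℝ),
      Ψ (y, s) + t • u = Ψ (y, s + t) := by
    intro y s t
    ext i
    show (if h : i ≠ j then y ⟨i,h⟩ else s) + t * (EuclideanSpace.single j (1:ℝ) i)
      = (if h : i ≠ j then y ⟨i,h⟩ else s + t)
    rw [EuclideanSpace.single_apply]
    by_cases h : i = j
    · simp [h]
    · simp [h]
  have hpre : (((volume : Measure ({i : Fin n // i ≠ j} → ℝ)).prod (volume : Measure ℝ)))
      (Ψ ⁻¹' Bad) = volume Bad :=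
    hΨ.measure_preimage hBadMeas.nullMeasurableSet
  rw [← hpre, Measure.measure_prod_null (hΨ.measurable hBadMeas)]
  refine Filter.Eventually.of_forall fun y => ?_
  show volume (Prod.mk y ⁻¹' (Ψ ⁻¹' Bad)) = 0
  set S : Set ℝ := {s : ℝ | Ψ (y, s) ∈ A} with hS
  have hSmeas : MeasurableSet S :=
    (hΨ.measurable.comp (measurable_const.prodMk measurable_id)) hA
  have hae := Besicovitch.ae_tendsto_measure_inter_div (volume : Measure ℝ) S
  rw [ae_restrict_iff' hSmeas] at hae
  have hsub : Prod.mk y ⁻¹' (Ψ ⁻¹' Bad) ⊆ {s : ℝ | s ∈ S ∧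
      ¬ Tendsto (fun r => volume (S ∩ closedBall s r) / volume (closedBall s r))
        (𝓝[>] (0:ℝ)) (𝓝 1)} := by
    intro s hs
    have hs1 : Ψ (y, s) ∈ A := hs.1
    refine ⟨hs1, fun hT => hs.2 ?_⟩
    intro k
    obtain ⟨δ, hδ0, hδ⟩ := QP_of_density hSmeas hT k
    refine ⟨δ, hδ0, fun q hq0 hqδ => ?_⟩
    have hset : {t : ℝ | Ψ (y, s) + t • u ∉ A} ∩ ball (0:ℝ) (q:ℝ)
        = (fun t => s + t) ⁻¹' (Sᶜ ∩ ball s (q:ℝ)) := by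
      ext t
      simp only [mem_inter_iff, mem_setOf_eq, mem_preimage, mem_compl_iff, mem_ball,
        hkey y s t, hS, Real.dist_eq]
      constructor
      · rintro ⟨h1, h2⟩
        exact ⟨h1, by simpa using h2⟩
      · rintro ⟨h1, h2⟩
        exact ⟨h1, by simpa using h2⟩
    rw [hset, measure_preimage_add]
    exact hδ q hq0 hqδ
  refine measure_mono_null hsub ?_
  have := hae
  rw [ae_iff] at this
  convert this using 2
  ext s; simp [Classical.not_imp]

end ApproxAux

/-- If `E` decomposes, up to a null set, into countably many disjoint measurable sets on
each of which `f` is Lipschitz, then `f` has approximate partial derivatives along every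
coordinate direction almost everywhere in `E`. -/
theorem approx_partials_of_lipschitz_decomposition {n m : ℕ}
    (E : Set (EuclideanSpace ℝ (Fin n))) (hE : MeasurableSet E)
    (f : EuclideanSpace ℝ (Fin n) → EuclideanSpace ℝ (Fin m))
    (Q : ℕ → Set (EuclideanSpace ℝ (Fin n)))
    (hdisj : Pairwise (Disjoint on Q)) (hQmeas : ∀ i, MeasurableSet (Q i))
    (hcover : volume (E \ ⋃ i, Q i) = 0)
    (hlip : ∀ i : ℕ, ∃ C : ℝ≥0, LipschitzOnWith C f (Q i)) :
    ∀ j : Fin n, ∀ᵐ x ∂volume, x ∈ E →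
      ∃ v : EuclideanSpace ℝ (Fin m), HasApproxPartialDerivAt E f j x v := by
  intro j
  -- Lipschitz extensions of the pieces
  have hext : ∀ i : ℕ, ∃ g : EuclideanSpace ℝ (Fin n) → EuclideanSpace ℝ (Fin m),
      ∃ K : ℝ≥0, LipschitzWith K g ∧ EqOn f g (Q i) := by
    intro i
    obtain ⟨C, hC⟩ := hlip i
    have h1 := (PiLp.lipschitzWith_ofLp 2 (fun _ : Fin m => ℝ)).comp_lipschitzOnWith hC
    obtain ⟨g', hg', hEq⟩ := h1.extend_pi
    have hsymmLip : ∃ K' : ℝ≥0, LipschitzWith K' ⇑(WithLp.equiv 2 (Fin m → ℝ)).symm :=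
      ⟨_, (PiLp.antilipschitzWith_ofLp 2 (fun _ : Fin m => ℝ)).to_rightInverse
        (fun z => (WithLp.equiv 2 (Fin m → ℝ)).apply_symm_apply z)⟩
    obtain ⟨K', hK'⟩ := hsymmLip
    refine ⟨fun x => (WithLp.equiv 2 (Fin m → ℝ)).symm (g' x), _, hK'.comp hg', ?_⟩
    intro x hx
    show f x = (WithLp.equiv 2 (Fin m → ℝ)).symm (g' x)
    rw [← hEq hx]
    simp [Function.comp]
  choose g K hK hEq using hext
  have hRad : ∀ i, ∀ᵐ x ∂(volume : Measure (EuclideanSpace ℝ (Fin n))),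
      DifferentiableAt ℝ (g i) x := fun i => (hK i).ae_differentiableAt
  have hDens : ∀ i, ∀ᵐ x ∂(volume : Measure (EuclideanSpace ℝ (Fin n))),
      x ∈ Q i → ApproxAux.QP (Q i) j x := fun i => ApproxAux.ae_line_density (Q i) (hQmeas i) j
  have hcov : ∀ᵐ x ∂(volume : Measure (EuclideanSpace ℝ (Fin n))), x ∉ E \ ⋃ i, Q i :=
    measure_eq_zero_iff_ae_notMem.1 hcover
  filter_upwards [ae_all_iff.2 hRad, ae_all_iff.2 hDens, hcov] with x hxRad hxDens hxcov hxE
  have hxU : x ∈ ⋃ i, Q i := by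
    by_contra h; exact hxcov ⟨hxE, h⟩
  obtain ⟨i, hxQ⟩ := mem_iUnion.1 hxU
  set u : EuclideanSpace ℝ (Fin n) := EuclideanSpace.single j (1:ℝ) with hu
  set v : EuclideanSpace ℝ (Fin m) := fderiv ℝ (g i) x u with hv
  refine ⟨v, ?_⟩
  intro ε hε
  -- the one-dimensional derivative of the extension along the line
  have hline : HasDerivAt (fun t : ℝ => x + t • u) u 0 := by
    have h1 : HasDerivAt (fun t : ℝ => t • u) ((1:ℝ) • u) 0 := (hasDerivAt_id (0:ℝ)).smul_const u
    simpa using h1.const_add x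
  have hψ : HasDerivAt (fun t : ℝ => g i (x + t • u)) v 0 := by
    have hF : HasFDerivAt (g i) (fderiv ℝ (g i) x) ((fun t : ℝ => x + t • u) 0) := by
      have hx0 : (fun t : ℝ => x + t • u) 0 = x := by simp
      rw [hx0]
      exact (hxRad i).hasFDerivAt
    exact hF.comp_hasDerivAt 0 hline
  have hLO := (hasDerivAt_iff_isLittleO.1 hψ).def hε
  rw [Metric.eventually_nhds_iff] at hLO
  obtain ⟨δ, hδ0, hδ⟩ := hLO
  -- off the piece `Q i`, inside radius `δ`
  have hfx : f x = g i x := hEq i hxQ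
  have hsub : ∀ t : ℝ, (x + t • u ∈ E ∧
      ε * |t| < ‖f (x + t • u) - f x - t • v‖) → |t| < δ → x + t • u ∉ Q i := by
    intro t ht htδ hQt
    have h1 : ‖g i (x + t • u) - g i (x + (0:ℝ) • u) - (t - 0) • v‖ ≤ ε * ‖t - (0:ℝ)‖ := by
      refine hδ ?_
      rw [Real.dist_eq, sub_zero]; exact htδ
    rw [hEq i hQt] at ht
    have h2 : ‖g i (x + t • u) - f x - t • v‖ ≤ ε * |t| := by
      rw [hfx]
      simpa using h1
    exact absurd h2 (not_le.2 ht.2)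
  -- density of the complement of `Q i` along the line
  have hT := ApproxAux.tendsto_of_QP (hxDens i hxQ)
  show Tendsto (fun r : ℝ => volume ({t : ℝ | x + t • u ∈ E ∧
      ε * |t| < ‖f (x + t • u) - f x - t • v‖} ∩ ball (0:ℝ) r) / volume (ball (0:ℝ) r))
    (𝓝[>] (0:ℝ)) (𝓝 0)
  rw [ENNReal.tendsto_nhds_zero]
  intro ε' hε'
  have h1 := ENNReal.tendsto_nhds_zero.1 hT ε' hε'
  filter_upwards [h1, Ioo_mem_nhdsGT_of_mem
    (show (0:ℝ) ∈ Ico (0:ℝ) δ from ⟨le_refl 0, hδ0⟩)] with r hr1 hr2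
  refine le_trans (ENNReal.div_le_div_right (measure_mono ?_) _) hr1
  intro t ht
  have htr : |t| < r := by simpa [Real.dist_eq] using ht.2
  exact ⟨hsub t ht.1 (htr.trans hr2.2), ht.2⟩
end

section
/- Let E ⊆ ℝ^n be a Lebesgue-measurable set, let g ∈ E be a density point of E, and let f : E → ℝ^m. Suppose there exist η > 0 and 0 < K < ∞ such that |f(u) − f(v)| ≤ K |u − v| for all u, v ∈ E ∩ B(g, η), and suppose L : ℝ^n → ℝ^m is a linear map with ap lim_{v→g} |f(v) − f(g) − L(v − g)|/|v − g| = 0. Then the genuine limit holds: |f(v) − f(g) − L(v − g)|/|v − g| → 0 as v → g with v ∈ E. -/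
open MeasureTheory Metric Filter Set Function
open scoped Topology ENNReal NNReal

/-- If `f` is Lipschitz on `E` near a density point `g` of `E` and `L` is an approximate
differential of `f` at `g`, then `L` is a genuine differential of `f|_E` at `g`. -/
theorem differential_of_approx_differential_of_lipschitz {n m : ℕ}
    (E : Set (EuclideanSpace ℝ (Fin n))) (hE : MeasurableSet E)
    (g : EuclideanSpace ℝ (Fin n)) (hgE : g ∈ E)
    (hgd : HasDensityAt volume E g 1)
    (f : EuclideanSpace ℝ (Fin n) → EuclideanSpace ℝ (Fin m))
    (η K : ℝ) (hη : 0 < η) (hK : 0 < K)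
    (hlip : ∀ u ∈ E ∩ ball g η, ∀ v ∈ E ∩ ball g η, ‖f u - f v‖ ≤ K * ‖u - v‖)
    (L : EuclideanSpace ℝ (Fin n) →ₗ[ℝ] EuclideanSpace ℝ (Fin m))
    (hap : ∀ ε : ℝ, 0 < ε →
      HasDensityAt volume {v ∈ E | ε * ‖v - g‖ < ‖f v - f g - L (v - g)‖} g 0) :
    Tendsto (fun v => ‖f v - f g - L (v - g)‖ / ‖v - g‖) (𝓝[E \ {g}] g) (𝓝 0) := by
  rcases subsingleton_or_nontrivial (EuclideanSpace ℝ (Fin n)) with hs | hs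
  · have hempty : E \ {g} = (∅ : Set (EuclideanSpace ℝ (Fin n))) := by
      ext v
      simp [Subsingleton.elim v g]
    rw [hempty, nhdsWithin_empty]
    exact tendsto_bot
  set μ : Measure (EuclideanSpace ℝ (Fin n)) := volume with hμ
  set C : ℝ := ‖LinearMap.toContinuousLinearMap L‖ with hCdef
  have hC : 0 ≤ C := norm_nonneg _
  have hCb : ∀ x, ‖L x‖ ≤ C * ‖x‖ := fun x => by
    simpa using (LinearMap.toContinuousLinearMap L).le_opNorm x
  rw [Metric.tendsto_nhdsWithin_nhds]
  intro ε hε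
  set ε' : ℝ := ε / 4 with hε'def
  have hε' : 0 < ε' := by positivity
  set δ : ℝ := min 1 (ε' / (K + C + 1)) with hδdef
  have hδ0 : 0 < δ := lt_min one_pos (by positivity)
  have hδ1 : δ ≤ 1 := min_le_left _ _
  have h1δ : (0:ℝ) < 1 + δ := by linarith
  set c : ℝ≥0∞ := ENNReal.ofReal ((δ / (1 + δ)) ^ n) with hcdef
  have hbase : 0 < δ / (1 + δ) := by positivity
  have hc0 : c ≠ 0 := by
    rw [hcdef, Ne, ENNReal.ofReal_eq_zero, not_le]
    positivity
  have hcT : c ≠ ⊤ := ENNReal.ofReal_ne_top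
  have hc1 : c ≤ 1 := by
    rw [hcdef]
    apply ENNReal.ofReal_le_one.2
    apply pow_le_one₀ hbase.le
    rw [div_le_one h1δ]; linarith
  set A := {v ∈ E | ε' * ‖v - g‖ < ‖f v - f g - L (v - g)‖} with hAdef
  have hA0 : Tendsto (fun r : ℝ => μ (A ∩ ball g r) / μ (ball g r)) (𝓝[>] 0) (𝓝 0) :=
    hap ε' hε'
  have hE1 : Tendsto (fun r : ℝ => μ (E ∩ ball g r) / μ (ball g r)) (𝓝[>] 0) (𝓝 1) := hgd
  have hc2 : (0:ℝ≥0∞) < c / 2 := ENNReal.div_pos hc0 (by norm_num)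
  have hev : ∀ᶠ r in 𝓝[>] (0:ℝ),
      μ (ball g r \ E) + μ (A ∩ ball g r) < c * μ (ball g r) := by
    filter_upwards [hA0.eventually (gt_mem_nhds hc2),
      hE1.eventually (Ioi_mem_nhds (ENNReal.sub_lt_self ENNReal.one_ne_top one_ne_zero hc2.ne')),
      self_mem_nhdsWithin] with r hAr hEr hr
    have hrpos : (0:ℝ) < r := hr
    have hBpos : μ (ball g r) ≠ 0 := (measure_ball_pos μ g hrpos).ne'
    have hBtop : μ (ball g r) ≠ ⊤ := measure_ball_lt_top.ne
    have h1 : μ (A ∩ ball g r) < c / 2 * μ (ball g r) :=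
      (ENNReal.div_lt_iff (Or.inl hBpos) (Or.inl hBtop)).1 hAr
    have h2 : (1 - c / 2) * μ (ball g r) < μ (E ∩ ball g r) :=
      (ENNReal.lt_div_iff_mul_lt (Or.inl hBpos) (Or.inl hBtop)).1 hEr
    have hdiff : μ (ball g r \ E) = μ (ball g r) - μ (E ∩ ball g r) := by
      have hxy : ball g r \ E = ball g r \ (E ∩ ball g r) := by
        ext x; simp only [mem_diff, mem_inter_iff]; tauto
      rw [hxy, measure_diff inter_subset_right
        (hE.inter measurableSet_ball).nullMeasurableSet
        (ne_top_of_le_ne_top hBtop (measure_mono inter_subset_right))]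
    have h3 : μ (ball g r \ E) ≤ c / 2 * μ (ball g r) := by
      rw [hdiff]
      calc μ (ball g r) - μ (E ∩ ball g r)
          ≤ μ (ball g r) - (1 - c / 2) * μ (ball g r) := tsub_le_tsub_left h2.le _
        _ = (1 - (1 - c / 2)) * μ (ball g r) := by
            conv_rhs => rw [ENNReal.sub_mul (fun _ _ => hBtop), one_mul]
        _ = c / 2 * μ (ball g r) := by
            rw [ENNReal.sub_sub_cancel ENNReal.one_ne_top (le_trans ENNReal.half_le_self hc1)]
    calc μ (ball g r \ E) + μ (A ∩ ball g r)
        ≤ c / 2 * μ (ball g r) + μ (A ∩ ball g r) := add_le_add_left h3 _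
      _ < c / 2 * μ (ball g r) + c / 2 * μ (ball g r) :=
          ENNReal.add_lt_add_left (ENNReal.mul_ne_top (ne_top_of_le_ne_top hcT ENNReal.half_le_self) hBtop) h1
      _ = c * μ (ball g r) := by rw [← add_mul, ENNReal.add_halves]
  obtain ⟨r1, hr1pos, hr1⟩ := mem_nhdsGT_iff_exists_Ioo_subset.1 hev
  have hr1pos' : (0:ℝ) < r1 := hr1pos
  refine ⟨min (r1 / (1 + δ)) (η / 2), by positivity, ?_⟩
  intro v hv hdist
  obtain ⟨hvE, hvg⟩ := hv
  have hvne : v ≠ g := fun h => hvg (by simp [h])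
  have hr' : (0:ℝ) < ‖v - g‖ := by
    rw [norm_pos_iff, sub_ne_zero]; exact hvne
  set r' : ℝ := ‖v - g‖ with hr'def
  have hdvg : dist v g = r' := dist_eq_norm v g
  have hrlt1 : r' < r1 / (1 + δ) := lt_of_lt_of_le (hdvg ▸ hdist) (min_le_left _ _)
  have hrltη : r' < η / 2 := lt_of_lt_of_le (hdvg ▸ hdist) (min_le_right _ _)
  set s : ℝ := (1 + δ) * r' with hsdef
  have hs0 : 0 < s := by positivity
  have hs1 : s < r1 := by
    rw [hsdef, ← lt_div_iff₀' h1δ]; exact hrlt1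
  have hprop : μ (ball g s \ E) + μ (A ∩ ball g s) < c * μ (ball g s) :=
    hr1 ⟨hs0, hs1⟩
  have hW : ((E \ A) ∩ ball v (δ * r')).Nonempty := by
    rw [nonempty_iff_ne_empty]
    intro hemp
    have hsub : ball v (δ * r') ⊆ (ball g s \ E) ∪ (A ∩ ball g s) := by
      intro x hx
      have hxs : x ∈ ball g s := by
        rw [mem_ball] at hx ⊢
        calc dist x g ≤ dist x v + dist v g := dist_triangle x v g
          _ < δ * r' + r' := by rw [hdvg]; exact add_lt_add_left hx r'
          _ = s := by rw [hsdef]; ring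
      by_cases hxE : x ∈ E
      · right
        refine ⟨?_, hxs⟩
        by_contra hxA
        have hxmem : x ∈ (E \ A) ∩ ball v (δ * r') := ⟨⟨hxE, hxA⟩, hx⟩
        rw [hemp] at hxmem
        exact hxmem
      · exact Or.inl ⟨hxs, hxE⟩
    have hle : μ (ball v (δ * r')) ≤ μ (ball g s \ E) + μ (A ∩ ball g s) :=
      le_trans (measure_mono hsub) (measure_union_le _ _)
    have heq : μ (ball v (δ * r')) = c * μ (ball g s) := by
      rw [hμ, Measure.addHaar_ball volume v (by positivity : (0:ℝ) ≤ δ * r'),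
        Measure.addHaar_ball volume g hs0.le, finrank_euclideanSpace_fin, hcdef,
        ← mul_assoc, ← ENNReal.ofReal_mul (by positivity), ← mul_pow]
      congr 3
      rw [hsdef]
      field_simp
    exact absurd hprop (not_lt.2 (by rw [← heq]; exact hle))
  obtain ⟨w, ⟨hwE, hwA⟩, hwv⟩ := hW
  rw [mem_ball] at hwv
  have hwvn : ‖w - v‖ < δ * r' := by rw [← dist_eq_norm]; exact hwv
  have hwA' : ‖f w - f g - L (w - g)‖ ≤ ε' * ‖w - g‖ := by
    by_contra h
    exact hwA ⟨hwE, not_le.1 h⟩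
  have h6 : δ * r' ≤ r' := by
    calc δ * r' ≤ 1 * r' := mul_le_mul_of_nonneg_right hδ1 hr'.le
      _ = r' := one_mul r'
  have hwg : ‖w - g‖ ≤ 2 * r' := by
    have h1 : dist w g ≤ dist w v + dist v g := dist_triangle w v g
    rw [dist_eq_norm, dist_eq_norm, dist_eq_norm] at h1
    linarith only [h1, hwvn, h6]
  have hvball : v ∈ ball g η := by
    rw [mem_ball, hdvg]; linarith
  have hwball : w ∈ ball g η := by
    rw [mem_ball]
    calc dist w g ≤ dist w v + dist v g := dist_triangle w v g
      _ < δ * r' + r' := by rw [hdvg]; exact add_lt_add_left hwv r'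
      _ < η := by linarith only [h6, hrltη, hr']
  have hlipvw : ‖f v - f w‖ ≤ K * ‖v - w‖ := hlip v ⟨hvE, hvball⟩ w ⟨hwE, hwball⟩
  have hLop : ‖L (w - v)‖ ≤ C * ‖w - v‖ := hCb (w - v)
  have hvw : ‖v - w‖ = ‖w - v‖ := norm_sub_rev v w
  have hδKC : δ * (K + C + 1) ≤ ε' := by
    have hδle : δ ≤ ε' / (K + C + 1) := min_le_right _ _
    rwa [le_div_iff₀ (by positivity)] at hδle
  clear_value C ε' δ r' s
  have h9 : (K + C) * (δ * r') ≤ ε' * r' := by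
    have h8 : δ * (K + C + 1) * r' ≤ ε' * r' := mul_le_mul_of_nonneg_right hδKC hr'.le
    have h7 : (0:ℝ) ≤ δ * r' := mul_nonneg hδ0.le hr'.le
    linarith only [h8, h7]
  have key : ‖f v - f g - L (v - g)‖ ≤ 3 * ε' * r' := by
    have hdecomp : f v - f g - L (v - g)
        = (f v - f w) + (f w - f g - L (w - g)) + L (w - v) := by
      rw [map_sub, map_sub, map_sub]
      abel
    calc ‖f v - f g - L (v - g)‖
        = ‖(f v - f w) + (f w - f g - L (w - g)) + L (w - v)‖ := by rw [hdecomp]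
      _ ≤ ‖(f v - f w) + (f w - f g - L (w - g))‖ + ‖L (w - v)‖ := norm_add_le _ _
      _ ≤ ‖f v - f w‖ + ‖f w - f g - L (w - g)‖ + ‖L (w - v)‖ :=
          add_le_add_left (norm_add_le _ _) _
      _ ≤ K * ‖v - w‖ + ε' * ‖w - g‖ + C * ‖w - v‖ :=
          add_le_add (add_le_add hlipvw hwA') hLop
      _ ≤ K * (δ * r') + ε' * (2 * r') + C * (δ * r') := by
          refine add_le_add (add_le_add ?_ ?_) ?_
          · rw [hvw]; exact mul_le_mul_of_nonneg_left hwvn.le hK.le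
          · exact mul_le_mul_of_nonneg_left hwg hε'.le
          · exact mul_le_mul_of_nonneg_left hwvn.le hC
      _ ≤ 3 * ε' * r' := by linarith only [h9]
  rw [Real.dist_eq, sub_zero, abs_of_nonneg (by positivity)]
  rw [div_lt_iff₀ hr']
  calc ‖f v - f g - L (v - g)‖ ≤ 3 * ε' * r' := key
    _ < ε * r' := by
        rw [hε'def]
        have h10 : 0 < ε * r' := mul_pos hε hr'
        linarith only [h10]
end
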